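/- arXiv:1312.7663 — 8 statements merged into one kernel-verified Lean document; each statement's English description precedes it below -/
import Mathlib

section
/- A topological dynamical system (X,T) on a compact metric space is mean equicontinuous if and only if it is mean-L-stable. -/
open Filter Topology MeasureTheory
open scoped Classical

noncomputable def avgDist {Z : Type*} [MetricSpace Z] (R : Z → Z) (x y : Z) (n : ℕ) : ℝ :=
  (n : ℝ)⁻¹ * ∑ i ∈ Finset.range n, dist (R^[i] x) (R^[i] y)

def MeanEquicontinuous {Z : Type*} [MetricSpace Z] (R : Z → Z) : Prop :=
  ∀ ε > 0, ∃ δ > 0, ∀ x y : Z, dist x y < δ →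
    Filter.limsup (avgDist R x y) Filter.atTop < ε

def MeanEqPtAt {Z : Type*} [MetricSpace Z] (R : Z → Z) (x : Z) : Prop :=
  ∀ ε > 0, ∃ δ > 0, ∀ y : Z, dist x y < δ →
    Filter.limsup (avgDist R x y) Filter.atTop < ε

def MeanSensitive {Z : Type*} [MetricSpace Z] (R : Z → Z) : Prop :=
  ∃ δ > 0, ∀ x : Z, ∀ ε > 0, ∃ y : Z, dist x y < ε ∧
    δ < Filter.limsup (avgDist R x y) Filter.atTop

theorem mean_equicontinuous_iff_mean_L_stable
    {X : Type*} [MetricSpace X] [CompactSpace X] (T : X → X) (hT : Continuous T) :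
    MeanEquicontinuous T ↔
      ∀ ε > 0, ∃ δ > 0, ∀ x y : X, dist x y < δ →
        Filter.limsup (fun n : ℕ =>
          (((Finset.range n).filter (fun i => ε ≤ dist (T^[i] x) (T^[i] y))).card : ℝ) / n)
          Filter.atTop < ε := by
  -- bound on diameter
  obtain ⟨C, hC0, hC⟩ : ∃ C : ℝ, 0 ≤ C ∧ ∀ x y : X, dist x y ≤ C := by
    rcases isEmpty_or_nonempty X with hX | hX
    · exact ⟨0, le_refl 0, fun x => isEmptyElim x⟩
    · obtain ⟨C, hC⟩ := Metric.isBounded_iff.1 (isCompact_univ (X := X)).isBounded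
      refine ⟨max C 0, le_max_right _ _, fun x y => ?_⟩
      exact le_trans (hC (Set.mem_univ x) (Set.mem_univ y)) (le_max_left _ _)
  constructor
  · intro h ε hε
    obtain ⟨δ, hδ, H⟩ := h (ε ^ 2 / 2) (by positivity)
    refine ⟨δ, hδ, fun x y hxy => ?_⟩
    have hbd : IsBoundedUnder (· ≤ ·) atTop (avgDist T x y) := by
      refine isBoundedUnder_of ⟨C, fun n => ?_⟩
      rcases Nat.eq_zero_or_pos n with rfl | hn
      · simpa [avgDist] using hC0
      have hn' : (0:ℝ) < n := by exact_mod_cast hn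
      unfold avgDist
      rw [inv_mul_le_iff₀ hn']
      calc ∑ i ∈ Finset.range n, dist (T^[i] x) (T^[i] y)
          ≤ ∑ _i ∈ Finset.range n, C := Finset.sum_le_sum (fun i _ => hC _ _)
        _ = n * C := by rw [Finset.sum_const, nsmul_eq_mul, Finset.card_range]
    have hev : ∀ᶠ n in atTop, avgDist T x y n < ε ^ 2 / 2 :=
      eventually_lt_of_limsup_lt (H x y hxy) hbd
    have key : ∀ n : ℕ,
        (((Finset.range n).filter (fun i => ε ≤ dist (T^[i] x) (T^[i] y))).card : ℝ) / n
          ≤ avgDist T x y n / ε := by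
      intro n
      rcases Nat.eq_zero_or_pos n with rfl | hn
      · simp [avgDist]
      have hn' : (0:ℝ) < n := by exact_mod_cast hn
      rw [div_le_div_iff₀ hn' hε]
      have h1 : (((Finset.range n).filter (fun i => ε ≤ dist (T^[i] x) (T^[i] y))).card : ℝ) * ε
          ≤ ∑ i ∈ Finset.range n, dist (T^[i] x) (T^[i] y) := by
        calc _ = ∑ _i ∈ (Finset.range n).filter (fun i => ε ≤ dist (T^[i] x) (T^[i] y)), ε := by
                rw [Finset.sum_const, nsmul_eq_mul]
          _ ≤ ∑ i ∈ (Finset.range n).filter (fun i => ε ≤ dist (T^[i] x) (T^[i] y)),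
                dist (T^[i] x) (T^[i] y) := by
                apply Finset.sum_le_sum
                intro i hi
                exact (Finset.mem_filter.1 hi).2
          _ ≤ _ := Finset.sum_le_sum_of_subset_of_nonneg (Finset.filter_subset _ _)
                (fun i _ _ => dist_nonneg)
      calc (((Finset.range n).filter (fun i => ε ≤ dist (T^[i] x) (T^[i] y))).card : ℝ) * ε
          ≤ ∑ i ∈ Finset.range n, dist (T^[i] x) (T^[i] y) := h1
        _ = avgDist T x y n * n := by
            unfold avgDist; field_simp
    have hev2 : ∀ᶠ n in atTop,
        (((Finset.range n).filter (fun i => ε ≤ dist (T^[i] x) (T^[i] y))).card : ℝ) / n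
          ≤ ε / 2 := by
      filter_upwards [hev] with n hn
      refine (key n).trans ?_
      rw [div_le_div_iff₀ hε (by norm_num : (0:ℝ) < 2)] at *
      nlinarith
    have hcb : IsCoboundedUnder (· ≤ ·) atTop (fun n : ℕ =>
        (((Finset.range n).filter (fun i => ε ≤ dist (T^[i] x) (T^[i] y))).card : ℝ) / n) :=
      isCoboundedUnder_le_of_le atTop (x := 0) (fun n => by positivity)
    exact lt_of_le_of_lt (limsup_le_of_le hcb hev2) (by linarith)
  · intro h ε hε
    set ε' : ℝ := ε / (2 * (C + 1)) with hε'def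
    have hε' : 0 < ε' := by positivity
    obtain ⟨δ, hδ, H⟩ := h ε' hε'
    refine ⟨δ, hδ, fun x y hxy => ?_⟩
    have hev : ∀ᶠ n in atTop,
        (((Finset.range n).filter (fun i => ε' ≤ dist (T^[i] x) (T^[i] y))).card : ℝ) / n < ε' := by
      refine eventually_lt_of_limsup_lt (H x y hxy) (isBoundedUnder_of ⟨1, fun n => ?_⟩)
      rcases Nat.eq_zero_or_pos n with rfl | hn
      · norm_num
      have hn' : (0:ℝ) < n := by exact_mod_cast hn
      rw [div_le_one hn']
      exact_mod_cast (Finset.card_filter_le _ _).trans (le_of_eq (Finset.card_range n))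
    have key : ∀ n : ℕ, avgDist T x y n ≤ ε' + C *
        ((((Finset.range n).filter (fun i => ε' ≤ dist (T^[i] x) (T^[i] y))).card : ℝ) / n) := by
      intro n
      rcases Nat.eq_zero_or_pos n with rfl | hn
      · simp [avgDist]; positivity
      have hn' : (0:ℝ) < n := by exact_mod_cast hn
      have h1 : ∑ i ∈ Finset.range n, dist (T^[i] x) (T^[i] y)
          ≤ C * (((Finset.range n).filter (fun i => ε' ≤ dist (T^[i] x) (T^[i] y))).card : ℝ)
            + ε' * n := by
        rw [← Finset.sum_filter_add_sum_filter_not (Finset.range n)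
            (fun i => ε' ≤ dist (T^[i] x) (T^[i] y))]
        gcongr ?_ + ?_
        · calc ∑ i ∈ (Finset.range n).filter (fun i => ε' ≤ dist (T^[i] x) (T^[i] y)),
                dist (T^[i] x) (T^[i] y)
              ≤ ∑ _i ∈ (Finset.range n).filter (fun i => ε' ≤ dist (T^[i] x) (T^[i] y)), C :=
                Finset.sum_le_sum (fun i _ => hC _ _)
            _ = _ := by rw [Finset.sum_const, nsmul_eq_mul, mul_comm]
        · calc ∑ i ∈ (Finset.range n).filter (fun i => ¬ ε' ≤ dist (T^[i] x) (T^[i] y)),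
                dist (T^[i] x) (T^[i] y)
              ≤ ∑ _i ∈ (Finset.range n).filter (fun i => ¬ ε' ≤ dist (T^[i] x) (T^[i] y)), ε' :=
                Finset.sum_le_sum (fun i hi => le_of_lt (not_le.1 (Finset.mem_filter.1 hi).2))
            _ = ((Finset.range n).filter (fun i => ¬ ε' ≤ dist (T^[i] x) (T^[i] y))).card * ε' := by
                rw [Finset.sum_const, nsmul_eq_mul]
            _ ≤ ε' * n := by
                rw [mul_comm]
                gcongr
                exact_mod_cast (Finset.card_filter_le _ _).trans (le_of_eq (Finset.card_range n))
      unfold avgDist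
      rw [inv_mul_le_iff₀ hn']
      calc ∑ i ∈ Finset.range n, dist (T^[i] x) (T^[i] y)
          ≤ C * (((Finset.range n).filter (fun i => ε' ≤ dist (T^[i] x) (T^[i] y))).card : ℝ)
            + ε' * n := h1
        _ = ↑n * (ε' + C * ((((Finset.range n).filter
              (fun i => ε' ≤ dist (T^[i] x) (T^[i] y))).card : ℝ) / n)) := by
            field_simp; ring
    have hev2 : ∀ᶠ n in atTop, avgDist T x y n ≤ ε' + C * ε' := by
      filter_upwards [hev] with n hn
      refine (key n).trans ?_
      have : C * ((((Finset.range n).filter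
          (fun i => ε' ≤ dist (T^[i] x) (T^[i] y))).card : ℝ) / n) ≤ C * ε' := by
        apply mul_le_mul_of_nonneg_left (le_of_lt hn) hC0
      linarith
    have hcb : IsCoboundedUnder (· ≤ ·) atTop (avgDist T x y) :=
      isCoboundedUnder_le_of_le atTop (x := 0) (fun n => by
        unfold avgDist
        positivity)
    refine lt_of_le_of_lt (limsup_le_of_le hcb hev2) ?_
    have : ε' + C * ε' = ε' * (C + 1) := by ring
    rw [this, hε'def]
    rw [div_mul_eq_mul_div, div_lt_iff₀ (by positivity)]
    nlinarith
end

section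
/- If (X,T) is mean equicontinuous, then for every f ∈ C(X) the sequence of Birkhoff averages f_n(x) = (1/n)∑_{i=0}^{n-1} f(T^i x) is uniformly equicontinuous, i.e., for every ε>0 there is δ>0 such that d(x,y)<δ implies |f_n(x)−f_n(y)|<ε for all n ∈ ℕ. -/
open Filter Topology MeasureTheory
open scoped Classical

namespace MEQaux

variable {X : Type*} [MetricSpace X] [CompactSpace X] {T : X → X}

/-- Birkhoff sums of the distance along the orbits. -/
noncomputable def bS (T : X → X) (x y : X) (n : ℕ) : ℝ :=
  ∑ i ∈ Finset.range n, dist (T^[i] x) (T^[i] y)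

lemma avgDist_eq (T : X → X) (x y : X) (n : ℕ) :
    avgDist T x y n = (n : ℝ)⁻¹ * bS T x y n := rfl

/-- The limsup of the average distances. -/
noncomputable def Dl (T : X → X) (x y : X) : ℝ :=
  Filter.limsup (avgDist T x y) Filter.atTop

lemma exists_bound (X : Type*) [MetricSpace X] [CompactSpace X] :
    ∃ C : ℝ, 0 ≤ C ∧ ∀ x y : X, dist x y ≤ C := by
  obtain ⟨C, hC⟩ := Metric.isBounded_iff.1 (isCompact_univ (X := X)).isBounded
  exact ⟨max C 0, le_max_right _ _, fun x y =>
    le_trans (hC (Set.mem_univ x) (Set.mem_univ y)) (le_max_left _ _)⟩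

section Bound

variable {C : ℝ} (hC : ∀ x y : X, dist x y ≤ C)

lemma bS_nonneg (x y : X) (n : ℕ) : 0 ≤ bS T x y n :=
  Finset.sum_nonneg fun _ _ => dist_nonneg

include hC in
lemma bS_le (x y : X) (n : ℕ) : bS T x y n ≤ n * C := by
  calc bS T x y n ≤ ∑ _i ∈ Finset.range n, C :=
        Finset.sum_le_sum fun i _ => hC _ _
    _ = n * C := by simp [Finset.sum_const, nsmul_eq_mul]

lemma avgDist_nonneg (x y : X) (n : ℕ) : 0 ≤ avgDist T x y n :=
  mul_nonneg (by positivity) (bS_nonneg x y n)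

include hC in
lemma avgDist_le (x y : X) (n : ℕ) : avgDist T x y n ≤ C := by
  rcases Nat.eq_zero_or_pos n with rfl | hn
  · have hC0 : 0 ≤ C := le_trans dist_nonneg (hC x y)
    simp [avgDist_eq, bS, hC0]
  · have hn' : (0 : ℝ) < n := by exact_mod_cast hn
    rw [avgDist_eq]
    calc (n : ℝ)⁻¹ * bS T x y n ≤ (n : ℝ)⁻¹ * (n * C) := by
          exact mul_le_mul_of_nonneg_left (bS_le (T := T) hC x y n) (by positivity)
      _ = C := by field_simp

include hC in
lemma bddU (x y : X) : IsBoundedUnder (· ≤ ·) atTop (avgDist T x y) :=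
  isBoundedUnder_of ⟨C, fun n => avgDist_le (T := T) hC x y n⟩

lemma bddL (x y : X) : IsBoundedUnder (· ≥ ·) atTop (avgDist T x y) :=
  isBoundedUnder_of ⟨0, fun n => avgDist_nonneg x y n⟩

include hC in
lemma Dl_le (x y : X) : Dl T x y ≤ C :=
  limsup_le_of_le (bddL x y).isCoboundedUnder_le
    (Filter.Eventually.of_forall fun n => avgDist_le (T := T) hC x y n)

include hC in
lemma Dl_triangle (x a b y : X) :
    Dl T x y ≤ Dl T x a + (Dl T a b + Dl T b y) := by
  have hpt : avgDist T x y ≤ᶠ[atTop]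
      (avgDist T x a + (avgDist T a b + avgDist T b y)) := by
    refine Filter.Eventually.of_forall fun n => ?_
    have hsum : bS T x y n ≤ bS T x a n + (bS T a b n + bS T b y n) := by
      have hs : bS T x y n ≤ ∑ i ∈ Finset.range n,
          (dist (T^[i] x) (T^[i] a) +
            (dist (T^[i] a) (T^[i] b) + dist (T^[i] b) (T^[i] y))) := by
        refine Finset.sum_le_sum fun i _ => ?_
        have := dist_triangle4 (T^[i] x) (T^[i] a) (T^[i] b) (T^[i] y)
        linarith
      simpa [bS, Finset.sum_add_distrib] using hs
    have h0 : (0:ℝ) ≤ (n : ℝ)⁻¹ := by positivity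
    simp only [Pi.add_apply, avgDist_eq]
    calc (n : ℝ)⁻¹ * bS T x y n
        ≤ (n : ℝ)⁻¹ * (bS T x a n + (bS T a b n + bS T b y n)) :=
          mul_le_mul_of_nonneg_left hsum h0
      _ = (n : ℝ)⁻¹ * bS T x a n + ((n : ℝ)⁻¹ * bS T a b n + (n : ℝ)⁻¹ * bS T b y n) := by
          ring
  have h1 : limsup (avgDist T x y) atTop ≤
      limsup (avgDist T x a + (avgDist T a b + avgDist T b y)) atTop := by
    refine limsup_le_limsup hpt (bddL x y).isCoboundedUnder_le ?_
    have : IsBoundedUnder (· ≤ ·) atTop (avgDist T a b + avgDist T b y) :=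
      Filter.isBoundedUnder_of ⟨C + C, fun n => by
        have hu1 := avgDist_le (T := T) hC a b n; have hu2 := avgDist_le (T := T) hC b y n
        simp only [Pi.add_apply]; linarith⟩
    exact Filter.isBoundedUnder_of ⟨C + (C + C), fun n => by
      have h1 := avgDist_le (T := T) hC x a n
      have h2 := avgDist_le (T := T) hC a b n
      have h3 := avgDist_le (T := T) hC b y n
      simp only [Pi.add_apply]; linarith⟩
  have h2 : limsup (avgDist T x a + (avgDist T a b + avgDist T b y)) atTop ≤
      limsup (avgDist T x a) atTop + limsup (avgDist T a b + avgDist T b y) atTop := by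
    refine limsup_add_le (bddL x a) (bddU hC x a) ?_ ?_
    · exact (Filter.isBoundedUnder_of ⟨(0:ℝ), fun n => by
        have hu1 := avgDist_nonneg (T := T) a b n
        have hu2 := avgDist_nonneg (T := T) b y n
        simp only [Pi.add_apply, ge_iff_le]; linarith⟩ :
          IsBoundedUnder (· ≥ ·) atTop _).isCoboundedUnder_le
    · exact Filter.isBoundedUnder_of ⟨C + C, fun n => by
        have hu1 := avgDist_le (T := T) hC a b n; have hu2 := avgDist_le (T := T) hC b y n
        simp only [Pi.add_apply]; linarith⟩
  have h3 : limsup (avgDist T a b + avgDist T b y) atTop ≤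
      limsup (avgDist T a b) atTop + limsup (avgDist T b y) atTop :=
    limsup_add_le (bddL a b) (bddU hC a b) (bddL b y).isCoboundedUnder_le (bddU hC b y)
  calc Dl T x y ≤ _ := h1
    _ ≤ _ := h2
    _ ≤ Dl T x a + (Dl T a b + Dl T b y) := by
        have := add_le_add_left h3 (limsup (avgDist T x a) atTop)
        simpa [Dl] using this

include hC in
lemma avg_shift_le (x y : X) (n : ℕ) :
    avgDist T (T x) (T y) n ≤ avgDist T x y (n + 1) + C * (n : ℝ)⁻¹ := by
  rcases Nat.eq_zero_or_pos n with rfl | hn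
  · have h0 := avgDist_nonneg (T := T) x y 1
    simp only [Nat.cast_zero, inv_zero, mul_zero, zero_add]
    simpa [avgDist_eq, bS] using h0
  · have hn' : (0 : ℝ) < n := by exact_mod_cast hn
    have hb : bS T (T x) (T y) n ≤ bS T x y (n + 1) := by
      have hrw : bS T (T x) (T y) n = ∑ i ∈ Finset.range n,
          dist (T^[i + 1] x) (T^[i + 1] y) := by
        refine Finset.sum_congr rfl fun i _ => ?_
        simp [Function.iterate_succ_apply]
      rw [hrw]
      have := Finset.sum_range_succ' (fun i => dist (T^[i] x) (T^[i] y)) n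
      -- ∑ i in range (n+1), f i = (∑ i in range n, f (i+1)) + f 0
      have h0 : (0:ℝ) ≤ dist (T^[0] x) (T^[0] y) := dist_nonneg
      rw [bS]
      rw [this]
      linarith
    have hbound : bS T x y (n + 1) ≤ (n + 1) * C := by
      have := bS_le (T := T) hC x y (n + 1)
      push_cast at this ⊢
      linarith
    have hb0 : 0 ≤ bS T x y (n + 1) := bS_nonneg x y (n + 1)
    rw [avgDist_eq, avgDist_eq]
    have key : (n : ℝ)⁻¹ * bS T x y (n+1) ≤
        ((n : ℝ) + 1)⁻¹ * bS T x y (n+1) + C * (n : ℝ)⁻¹ := by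
      have hn1 : (0:ℝ) < (n : ℝ) + 1 := by linarith
      set s := bS T x y (n+1) with hs
      have e1 : (n:ℝ)⁻¹ * s = ((n:ℝ)+1)⁻¹ * s + s / ((n:ℝ)*((n:ℝ)+1)) := by
        field_simp
      have e2 : s / ((n:ℝ)*((n:ℝ)+1)) ≤ C * (n:ℝ)⁻¹ := by
        rw [div_le_iff₀ (by positivity)]
        have e3 : C * (n:ℝ)⁻¹ * ((n:ℝ)*((n:ℝ)+1)) = C * ((n:ℝ)+1) := by
          field_simp
        rw [e3]
        nlinarith [hbound]
      linarith
    calc (n : ℝ)⁻¹ * bS T (T x) (T y) n ≤ (n : ℝ)⁻¹ * bS T x y (n+1) :=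
          mul_le_mul_of_nonneg_left hb (by positivity)
      _ ≤ ((n : ℝ) + 1)⁻¹ * bS T x y (n+1) + C * (n : ℝ)⁻¹ := key
      _ = (((n:ℕ) + 1 : ℕ) : ℝ)⁻¹ * bS T x y (n+1) + C * (n : ℝ)⁻¹ := by push_cast; ring

include hC in
lemma Dl_shift (x y : X) : Dl T (T x) (T y) ≤ Dl T x y := by
  have hC0 : 0 ≤ C := le_trans dist_nonneg (hC x x)
  set u : ℕ → ℝ := fun n => avgDist T x y (n + 1) with hu
  set v : ℕ → ℝ := fun n => C * (n : ℝ)⁻¹ with hv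
  have hvt : Tendsto v atTop (𝓝 0) := by
    have := tendsto_inv_atTop_nhds_zero_nat.const_mul C
    simpa using this
  have hvlimsup : limsup v atTop = 0 := hvt.limsup_eq
  have hubdd : IsBoundedUnder (· ≤ ·) atTop u :=
    isBoundedUnder_of ⟨C, fun n => avgDist_le (T := T) hC x y (n + 1)⟩
  have hubddL : IsBoundedUnder (· ≥ ·) atTop u :=
    isBoundedUnder_of ⟨0, fun n => avgDist_nonneg x y (n + 1)⟩
  have hvbdd : IsBoundedUnder (· ≤ ·) atTop v := by
    refine isBoundedUnder_of ⟨C, fun n => ?_⟩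
    rcases Nat.eq_zero_or_pos n with rfl | hn
    · simp [hv, hC0]
    · have hn' : (1:ℝ) ≤ n := by exact_mod_cast hn
      have : (n:ℝ)⁻¹ ≤ 1 := by
        rw [inv_le_one_iff₀]
        right; exact hn'
      calc C * (n:ℝ)⁻¹ ≤ C * 1 := mul_le_mul_of_nonneg_left this hC0
        _ = C := mul_one C
  have hvbddL : IsBoundedUnder (· ≥ ·) atTop v :=
    isBoundedUnder_of ⟨0, fun n => by positivity⟩
  have h1 : limsup (avgDist T (T x) (T y)) atTop ≤ limsup (u + v) atTop := by
    refine limsup_le_limsup (Filter.Eventually.of_forall fun n => ?_)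
      (bddL (T x) (T y)).isCoboundedUnder_le ?_
    · simpa [hu, hv] using avg_shift_le hC x y n
    · refine isBoundedUnder_of ⟨C + C, fun n => ?_⟩
      have h1 := avgDist_le (T := T) hC x y (n+1)
      rcases hvbdd with _
      have h2 : v n ≤ C := by
        rcases Nat.eq_zero_or_pos n with rfl | hn
        · simp [hv, hC0]
        · have hn' : (1:ℝ) ≤ n := by exact_mod_cast hn
          have : (n:ℝ)⁻¹ ≤ 1 := by
            rw [inv_le_one_iff₀]
            right; exact hn'
          calc C * (n:ℝ)⁻¹ ≤ C * 1 := mul_le_mul_of_nonneg_left this hC0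
            _ = C := mul_one C
      simp only [Pi.add_apply]
      exact add_le_add h1 h2
  have h2 : limsup (u + v) atTop ≤ limsup u atTop + limsup v atTop :=
    limsup_add_le hubddL hubdd hvbddL.isCoboundedUnder_le hvbdd
  have h3 : limsup u atTop = Dl T x y := by
    have := Filter.limsup_nat_add (avgDist T x y) 1
    simpa [hu, Dl] using this
  calc Dl T (T x) (T y) ≤ limsup (u + v) atTop := h1
    _ ≤ limsup u atTop + limsup v atTop := h2
    _ = Dl T x y := by rw [h3, hvlimsup, add_zero]

end Bound

lemma unif_family (hT : Continuous T) (ε : ℝ) (hε : 0 < ε) (N : ℕ) :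
    ∃ δ > 0, ∀ i < N, ∀ x y : X, dist x y < δ → dist (T^[i] x) (T^[i] y) < ε := by
  induction N with
  | zero => exact ⟨1, one_pos, fun i hi => absurd hi (Nat.not_lt_zero i)⟩
  | succ N ihN =>
    obtain ⟨δ, hδ, hfam⟩ := ihN
    have hu : UniformContinuous (T^[N]) :=
      CompactSpace.uniformContinuous_of_continuous (hT.iterate N)
    obtain ⟨δ', hδ', hδ'h⟩ := Metric.uniformContinuous_iff.1 hu ε hε
    refine ⟨min δ δ', lt_min hδ hδ', fun i hi x y hxy => ?_⟩
    rcases Nat.lt_succ_iff_lt_or_eq.1 hi with hi' | rfl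
    · exact hfam i hi' x y (lt_of_lt_of_le hxy (min_le_left _ _))
    · exact hδ'h (lt_of_lt_of_le hxy (min_le_right _ _))

theorem key_lemma (T : X → X) (hT : Continuous T) (h : MeanEquicontinuous T) :
    ∀ ε > 0, ∃ δ > 0, ∀ x y : X, dist x y < δ → ∀ n : ℕ, avgDist T x y n < ε := by
  obtain ⟨C, hC0, hC⟩ := exists_bound X
  intro ε hε
  set β := ε / 8 with hβdef
  have hβ : 0 < β := by positivity
  obtain ⟨δ₁, hδ₁, hmean⟩ := h β hβ
  set A : Set (X × X) := {p | Dl T p.1 p.2 ≤ β} with hA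
  set W : Set (X × X) := closure A with hWdef
  have hWclosed : IsClosed W := isClosed_closure
  have hWcomp : IsCompact W := hWclosed.isCompact
  set φ : X × X → X × X := fun p => (T p.1, T p.2) with hφdef
  have hφc : Continuous φ := (hT.comp continuous_fst).prodMk (hT.comp continuous_snd)
  have hWinv : ∀ p ∈ W, φ p ∈ W := by
    intro p hp
    have h1 : φ '' A ⊆ A := by
      rintro q ⟨r, hr, rfl⟩
      exact le_trans (Dl_shift hC r.1 r.2) hr
    have h2 : φ p ∈ closure (φ '' A) :=
      image_closure_subset_closure_image hφc ⟨p, hp, rfl⟩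
    exact closure_mono h1 h2
  have hWinvIter : ∀ (k : ℕ), ∀ p ∈ W, ((T^[k] p.1, T^[k] p.2) : X × X) ∈ W := by
    intro k
    induction k with
    | zero => intro p hp; simpa using hp
    | succ k ihk =>
      intro p hp
      have := hWinv _ (ihk p hp)
      simpa [hφdef, Function.iterate_succ_apply'] using this
  have hWD : ∀ p ∈ W, Dl T p.1 p.2 ≤ 3 * β := by
    intro p hp
    obtain ⟨q, hqA, hqd⟩ := Metric.mem_closure_iff.1 hp δ₁ hδ₁
    have h1 : dist p.1 q.1 < δ₁ :=
      lt_of_le_of_lt (by rw [Prod.dist_eq]; exact le_max_left _ _) hqd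
    have h2 : dist p.2 q.2 < δ₁ :=
      lt_of_le_of_lt (by rw [Prod.dist_eq]; exact le_max_right _ _) hqd
    have d1 : Dl T p.1 q.1 ≤ β := le_of_lt (hmean _ _ h1)
    have d2 : Dl T q.2 p.2 ≤ β := le_of_lt (hmean _ _ (by rw [dist_comm]; exact h2))
    have dq : Dl T q.1 q.2 ≤ β := hqA
    have htri := Dl_triangle (T := T) hC p.1 q.1 q.2 p.2
    linarith
  have hchoice : ∀ p : W, ∃ k : ℕ, 1 ≤ k ∧
      avgDist T (p : X × X).1 (p : X × X).2 k < 4 * β := by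
    intro p
    have hlt : Dl T (p : X × X).1 (p : X × X).2 < 4 * β :=
      lt_of_le_of_lt (hWD _ p.2) (by linarith)
    have hev : ∀ᶠ k in atTop, avgDist T (p : X × X).1 (p : X × X).2 k < 4 * β :=
      eventually_lt_of_limsup_lt hlt (bddU hC _ _)
    obtain ⟨k, hk1, hk2⟩ := (hev.and (eventually_ge_atTop 1)).exists
    exact ⟨k, hk2, hk1⟩
  choose m hm1 hm2 using hchoice
  set U : W → Set (X × X) := fun p => {q | avgDist T q.1 q.2 (m p) < 4 * β} with hU
  have hUopen : ∀ p, IsOpen (U p) := by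
    intro p
    have hcont : Continuous fun q : X × X => avgDist T q.1 q.2 (m p) := by
      simp only [avgDist]
      exact continuous_const.mul (continuous_finset_sum _ fun i _ =>
        Continuous.dist ((hT.iterate i).comp continuous_fst)
          ((hT.iterate i).comp continuous_snd))
    exact isOpen_lt hcont continuous_const
  have hUcover : W ⊆ ⋃ p : W, U p := fun q hq => Set.mem_iUnion.2 ⟨⟨q, hq⟩, hm2 ⟨q, hq⟩⟩
  obtain ⟨t, ht⟩ := hWcomp.elim_finite_subcover U hUopen hUcover
  set N : ℕ := 1 + t.sup m with hNdef
  have hcov : ∀ p ∈ W, ∃ k, 1 ≤ k ∧ k ≤ N ∧ avgDist T p.1 p.2 k < 4 * β := by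
    intro p hp
    obtain ⟨i, hit, hpi⟩ := Set.mem_iUnion₂.1 (ht hp)
    exact ⟨m i, hm1 i, le_trans (Finset.le_sup hit) (Nat.le_add_left _ 1), hpi⟩
  have hsum : ∀ n : ℕ, ∀ p ∈ W, bS T p.1 p.2 n ≤ 4 * β * n + N * C := by
    intro n
    induction n using Nat.strong_induction_on with
    | _ n ih =>
      intro p hp
      rcases le_or_gt n N with hn | hn
      · have h1 : bS T p.1 p.2 n ≤ n * C := bS_le (T := T) hC _ _ n
        have h2 : (n : ℝ) * C ≤ N * C :=
          mul_le_mul_of_nonneg_right (by exact_mod_cast hn) hC0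
        have h3 : (0:ℝ) ≤ 4 * β * n := by positivity
        linarith
      · obtain ⟨k, hk1, hkN, hkavg⟩ := hcov p hp
        have hkn : k < n := lt_of_le_of_lt hkN hn
        have hk0 : (0:ℝ) < k := by exact_mod_cast hk1
        have hsplit : bS T p.1 p.2 n = bS T p.1 p.2 k +
            ∑ i ∈ Finset.range (n - k), dist (T^[k + i] p.1) (T^[k + i] p.2) := by
          have hnk : k + (n - k) = n := Nat.add_sub_cancel' (le_of_lt hkn)
          have hx := Finset.sum_range_add (fun i => dist (T^[i] p.1) (T^[i] p.2)) k (n - k)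
          rw [hnk] at hx
          simpa [bS] using hx
        have hsecond : ∑ i ∈ Finset.range (n - k), dist (T^[k + i] p.1) (T^[k + i] p.2)
            = bS T (T^[k] p.1) (T^[k] p.2) (n - k) := by
          refine Finset.sum_congr rfl fun i _ => ?_
          rw [add_comm k i, Function.iterate_add_apply, Function.iterate_add_apply]
        have hIH := ih (n - k) (by omega) (T^[k] p.1, T^[k] p.2) (hWinvIter k p hp)
        simp only at hIH
        have hfirst : bS T p.1 p.2 k ≤ 4 * β * k := by
          have hlt : (k:ℝ)⁻¹ * bS T p.1 p.2 k < 4 * β := hkavg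
          have heq : bS T p.1 p.2 k = (k:ℝ) * ((k:ℝ)⁻¹ * bS T p.1 p.2 k) := by
            field_simp
          rw [heq]
          calc (k:ℝ) * ((k:ℝ)⁻¹ * bS T p.1 p.2 k) ≤ (k:ℝ) * (4 * β) :=
                mul_le_mul_of_nonneg_left (le_of_lt hlt) (le_of_lt hk0)
            _ = 4 * β * k := by ring
        have hcast : ((n - k : ℕ) : ℝ) = (n : ℝ) - (k : ℝ) :=
          Nat.cast_sub (le_of_lt hkn)
        rw [hcast] at hIH
        rw [hsplit, hsecond]
        linarith
  have htail : ∀ p ∈ W, ∀ n : ℕ, 1 ≤ n →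
      avgDist T p.1 p.2 n ≤ 4 * β + ((N:ℝ) * C) * (n:ℝ)⁻¹ := by
    intro p hp n hn
    have hn0 : (0:ℝ) < n := by exact_mod_cast hn
    rw [avgDist_eq]
    have h1 := hsum n p hp
    calc (n:ℝ)⁻¹ * bS T p.1 p.2 n ≤ (n:ℝ)⁻¹ * (4 * β * n + N * C) :=
          mul_le_mul_of_nonneg_left h1 (by positivity)
      _ = 4 * β + ((N:ℝ) * C) * (n:ℝ)⁻¹ := by
          field_simp
          try ring
  have hv : Tendsto (fun n : ℕ => ((N:ℝ) * C) * (n:ℝ)⁻¹) atTop (𝓝 0) := by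
    simpa using tendsto_inv_atTop_nhds_zero_nat.const_mul ((N:ℝ) * C)
  have hev : ∀ᶠ n : ℕ in atTop, ((N:ℝ) * C) * (n:ℝ)⁻¹ < 4 * β :=
    hv.eventually_lt_const (by positivity)
  obtain ⟨N₀, hN₀⟩ := Filter.eventually_atTop.1 (hev.and (eventually_ge_atTop 1))
  obtain ⟨δ₂, hδ₂, hsmall⟩ := unif_family hT ε hε N₀
  refine ⟨min δ₁ δ₂, lt_min hδ₁ hδ₂, fun x y hxy n => ?_⟩
  have hxy1 : dist x y < δ₁ := lt_of_lt_of_le hxy (min_le_left _ _)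
  have hxy2 : dist x y < δ₂ := lt_of_lt_of_le hxy (min_le_right _ _)
  have hpA : ((x, y) : X × X) ∈ A := le_of_lt (hmean x y hxy1)
  have hpW : ((x, y) : X × X) ∈ W := subset_closure hpA
  rcases lt_or_ge n N₀ with hn | hn
  · rcases Nat.eq_zero_or_pos n with rfl | hn1
    · simpa [avgDist_eq, bS] using hε
    · rw [avgDist_eq]
      have hterm : ∀ i ∈ Finset.range n, dist (T^[i] x) (T^[i] y) < ε := fun i hi =>
        hsmall i (lt_trans (Finset.mem_range.1 hi) hn) x y hxy2
      have hn0 : (0:ℝ) < n := by exact_mod_cast hn1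
      have hsum' : bS T x y n < n * ε := by
        rw [bS]
        calc ∑ i ∈ Finset.range n, dist (T^[i] x) (T^[i] y)
            < ∑ _i ∈ Finset.range n, ε :=
              Finset.sum_lt_sum_of_nonempty (by rw [Finset.nonempty_range_iff]; omega) hterm
          _ = n * ε := by simp [mul_comm]
      calc (n:ℝ)⁻¹ * bS T x y n < (n:ℝ)⁻¹ * (n * ε) :=
            mul_lt_mul_of_pos_left hsum' (by positivity)
        _ = ε := by field_simp
  · obtain ⟨hb, hn1⟩ := hN₀ n hn
    have hta := htail (x, y) hpW n hn1
    simp only at hta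
    have hβε : 8 * β = ε := by rw [hβdef]; ring
    linarith

end MEQaux

theorem birkhoff_averages_uniformly_equicontinuous
    {X : Type*} [MetricSpace X] [CompactSpace X] (T : X → X) (hT : Continuous T)
    (h : MeanEquicontinuous T) (f : C(X, ℝ)) :
    ∀ ε > 0, ∃ δ > 0, ∀ x y : X, dist x y < δ → ∀ n : ℕ,
      |(n : ℝ)⁻¹ * ∑ i ∈ Finset.range n, f (T^[i] x) -
        (n : ℝ)⁻¹ * ∑ i ∈ Finset.range n, f (T^[i] y)| < ε := by
  intro ε hε
  set M : ℝ := ‖f‖ + 1 with hMdef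
  have hM0 : (0:ℝ) < M := by positivity
  have hfb : ∀ a : X, |f a| ≤ ‖f‖ := fun a => by
    simpa [Real.norm_eq_abs] using f.norm_coe_le_norm a
  have huc : UniformContinuous f :=
    CompactSpace.uniformContinuous_of_continuous f.continuous
  obtain ⟨η, hη, hηf⟩ := Metric.uniformContinuous_iff.1 huc (ε/4) (by positivity)
  set K : ℝ := 2 * M / η with hKdef
  have hK0 : (0:ℝ) < K := by positivity
  have hpt : ∀ a b : X, |f a - f b| ≤ ε/4 + K * dist a b := by
    intro a b
    rcases lt_or_ge (dist a b) η with hd | hd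
    · have h1 := hηf hd
      rw [Real.dist_eq] at h1
      have h0 : 0 ≤ K * dist a b := mul_nonneg (le_of_lt hK0) dist_nonneg
      linarith
    · have h1 : |f a - f b| ≤ |f a| + |f b| := by
        have h := abs_add_le (f a) (-(f b))
        rw [← sub_eq_add_neg, abs_neg] at h
        exact h
      have h2 : |f a| + |f b| ≤ 2 * M := by
        have ha := hfb a; have hb := hfb b
        rw [hMdef]; linarith
      have h3 : 2 * M = K * η := by
        rw [hKdef]; field_simp
      have h4 : K * η ≤ K * dist a b := mul_le_mul_of_nonneg_left hd (le_of_lt hK0)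
      have h5 : (0:ℝ) ≤ ε / 4 := by positivity
      linarith
  set ε₂ : ℝ := ε / (4 * K) with hε₂def
  have hε₂0 : 0 < ε₂ := by positivity
  obtain ⟨δ, hδ, hkey⟩ := MEQaux.key_lemma T hT h ε₂ hε₂0
  refine ⟨δ, hδ, fun x y hxy n => ?_⟩
  rcases Nat.eq_zero_or_pos n with rfl | hn
  · simpa using hε
  · have hn0 : (0:ℝ) < n := by exact_mod_cast hn
    have havg := hkey x y hxy n
    have hstep1 : |(n : ℝ)⁻¹ * ∑ i ∈ Finset.range n, f (T^[i] x) -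
        (n : ℝ)⁻¹ * ∑ i ∈ Finset.range n, f (T^[i] y)|
        = (n : ℝ)⁻¹ * |∑ i ∈ Finset.range n, (f (T^[i] x) - f (T^[i] y))| := by
      rw [← mul_sub, ← Finset.sum_sub_distrib, abs_mul,
        abs_of_nonneg (by positivity : (0:ℝ) ≤ (n:ℝ)⁻¹)]
    rw [hstep1]
    have hstep2 : |∑ i ∈ Finset.range n, (f (T^[i] x) - f (T^[i] y))| ≤
        ∑ i ∈ Finset.range n, (ε/4 + K * dist (T^[i] x) (T^[i] y)) :=
      le_trans (Finset.abs_sum_le_sum_abs _ _) (Finset.sum_le_sum fun i _ => hpt _ _)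
    have hstep3 : ∑ i ∈ Finset.range n, (ε/4 + K * dist (T^[i] x) (T^[i] y))
        = (n:ℝ) * (ε/4) + K * (∑ i ∈ Finset.range n, dist (T^[i] x) (T^[i] y)) := by
      rw [Finset.sum_add_distrib, ← Finset.mul_sum]
      simp [mul_comm]
    have hfinal : (n:ℝ)⁻¹ * ((n:ℝ) * (ε/4) +
          K * (∑ i ∈ Finset.range n, dist (T^[i] x) (T^[i] y)))
        = ε/4 + K * avgDist T x y n := by
      rw [avgDist]
      field_simp
    have hKavg : K * avgDist T x y n < ε/4 := by
      have h1 : K * avgDist T x y n < K * ε₂ := mul_lt_mul_of_pos_left havg hK0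
      have heq : K * ε₂ = ε / 4 := by
        rw [hε₂def]
        field_simp
        try ring
      linarith
    calc (n:ℝ)⁻¹ * |∑ i ∈ Finset.range n, (f (T^[i] x) - f (T^[i] y))|
        ≤ (n:ℝ)⁻¹ * ((n:ℝ) * (ε/4) +
            K * (∑ i ∈ Finset.range n, dist (T^[i] x) (T^[i] y))) :=
          mul_le_mul_of_nonneg_left (le_trans hstep2 (le_of_eq hstep3))
            (by positivity)
      _ = ε/4 + K * avgDist T x y n := hfinal
      _ < ε/4 + ε/4 := by linarith
      _ < ε := by linarith
end

section
/- If for every f ∈ C(X×X) the sequence of Birkhoff averages f_n converges uniformly to a (T×T)-invariant continuous function, then (X,T) is mean equicontinuous. -/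
open Filter Topology MeasureTheory
open scoped Classical

theorem meanEquicontinuous_of_uniform_convergence
    {X : Type*} [MetricSpace X] [CompactSpace X] (T : X → X) (hT : Continuous T)
    (h : ∀ f : C(X × X, ℝ), ∃ g : C(X × X, ℝ),
      (∀ p : X × X, g (T p.1, T p.2) = g p) ∧
      TendstoUniformly
        (fun (n : ℕ) (p : X × X) =>
          (n : ℝ)⁻¹ * ∑ i ∈ Finset.range n, f (T^[i] p.1, T^[i] p.2))
        (fun p => g p) Filter.atTop) :
    MeanEquicontinuous T := by
  obtain ⟨g, hginv, hconv⟩ := h ⟨fun p => dist p.1 p.2, continuous_dist⟩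
  -- pointwise limit
  have hlim : ∀ x y : X, Tendsto (avgDist T x y) atTop (𝓝 (g (x, y))) := by
    intro x y
    exact hconv.tendsto_at (x, y)
  have hlimsup : ∀ x y : X, Filter.limsup (avgDist T x y) Filter.atTop = g (x, y) := by
    intro x y
    exact (hlim x y).limsup_eq
  have hdiag : ∀ x : X, g (x, x) = 0 := by
    intro x
    have h0 : Tendsto (avgDist T x x) atTop (𝓝 0) := by
      have : avgDist T x x = fun _ => (0 : ℝ) := by
        funext n; simp [avgDist]
      rw [this]; exact tendsto_const_nhds
    exact tendsto_nhds_unique (hlim x x) h0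
  have hUC : UniformContinuous g := CompactSpace.uniformContinuous_of_continuous g.continuous
  intro ε hε
  obtain ⟨δ, hδ, hδ'⟩ := Metric.uniformContinuous_iff.mp hUC ε hε
  refine ⟨δ, hδ, fun x y hxy => ?_⟩
  have hd : dist ((x, y) : X × X) (x, x) < δ := by
    rw [Prod.dist_eq]
    simp only [dist_self]
    exact max_lt hδ (by rwa [dist_comm])
  have := hδ' hd
  rw [hdiag x, dist_zero_right, Real.norm_eq_abs] at this
  rw [hlimsup x y]
  exact lt_of_le_of_lt (le_abs_self _) this
end

section
/- If (X,T) is mean equicontinuous, then every regionally proximal pair is proximal, i.e., Q(X,T) = P(X,T). -/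
open Filter Topology MeasureTheory
open scoped Classical

lemma avgDist_nonneg {Z : Type*} [MetricSpace Z] (R : Z → Z) (x y : Z) (n : ℕ) :
    0 ≤ avgDist R x y n := by
  unfold avgDist
  positivity

lemma eventually_avgDist_lt {Z : Type*} [MetricSpace Z] (R : Z → Z) (x y : Z) {c : ℝ}
    (hub : ∃ C : ℝ, ∀ m : ℕ, avgDist R x y m ≤ C)
    (hc : Filter.limsup (avgDist R x y) Filter.atTop < c) :
    ∃ M : ℕ, ∀ m ≥ M, avgDist R x y m < c := by
  obtain ⟨C, hC⟩ := hub
  have hb : Filter.IsBoundedUnder (· ≤ ·) Filter.atTop (avgDist R x y) :=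
    ⟨C, Filter.eventually_map.mpr (Filter.Eventually.of_forall hC)⟩
  have := Filter.eventually_lt_of_limsup_lt hc hb
  exact Filter.eventually_atTop.mp this

lemma sum_dist_lt {Z : Type*} [MetricSpace Z] (R : Z → Z) (x y : Z) {c : ℝ} {m : ℕ}
    (hm : 0 < m) (hlt : avgDist R x y m < c) :
    ∑ i ∈ Finset.range m, dist (R^[i] x) (R^[i] y) < (m : ℝ) * c := by
  have hm' : (0:ℝ) < (m : ℝ) := by exact_mod_cast hm
  have := mul_lt_mul_of_pos_left hlt hm'
  calc ∑ i ∈ Finset.range m, dist (R^[i] x) (R^[i] y)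
      = (m : ℝ) * avgDist R x y m := by
        unfold avgDist; field_simp
    _ < (m : ℝ) * c := this

lemma shift_sum_le (f : ℕ → ℝ) (hf : ∀ i, 0 ≤ f i) (n m : ℕ) :
    ∑ j ∈ Finset.range m, f (j + n) ≤ ∑ i ∈ Finset.range (n + m), f i := by
  rw [Finset.sum_range_add]
  have h1 : ∑ j ∈ Finset.range m, f (j + n) = ∑ j ∈ Finset.range m, f (n + j) :=
    Finset.sum_congr rfl fun j _ => by rw [add_comm]
  rw [h1]
  have h2 : 0 ≤ ∑ i ∈ Finset.range n, f i :=
    Finset.sum_nonneg fun i _ => hf i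
  linarith

theorem regionallyProximal_eq_proximal_of_meanEquicontinuous
    {X : Type*} [MetricSpace X] [CompactSpace X] (T : X → X) (hT : Continuous T)
    (h : MeanEquicontinuous T) :
    {p : X × X | ∀ ε > 0, ∃ x' y' : X, dist p.1 x' < ε ∧ dist p.2 y' < ε ∧
        ∃ n : ℕ, dist (T^[n] x') (T^[n] y') < ε} =
      {p : X × X | (⨅ n : ℕ, dist (T^[n] p.1) (T^[n] p.2)) = 0} := by
  ext ⟨x, y⟩
  simp only [Set.mem_setOf_eq]
  have hbdd : BddBelow (Set.range fun n : ℕ => dist (T^[n] x) (T^[n] y)) :=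
    ⟨0, by rintro r ⟨n, rfl⟩; exact dist_nonneg⟩
  constructor
  · intro hrp
    -- a uniform bound on distances from compactness
    obtain ⟨C, hC⟩ := Metric.isBounded_iff.mp
      (isCompact_univ (X := X)).isBounded
    have hCd : ∀ a b : X, dist a b ≤ C := fun a b =>
      hC (Set.mem_univ a) (Set.mem_univ b)
    have hC0 : (0 : ℝ) ≤ C := le_trans dist_nonneg (hCd x x)
    have hub : ∀ a b : X, ∃ D : ℝ, ∀ m : ℕ, avgDist T a b m ≤ D := by
      intro a b
      refine ⟨C, fun m => ?_⟩
      rcases Nat.eq_zero_or_pos m with rfl | hm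
      · simp [avgDist]; exact hC0
      · have hm' : (0:ℝ) < (m : ℝ) := by exact_mod_cast hm
        have hsum : ∑ i ∈ Finset.range m, dist (T^[i] a) (T^[i] b) ≤ (m : ℝ) * C := by
          calc ∑ i ∈ Finset.range m, dist (T^[i] a) (T^[i] b)
              ≤ ∑ _i ∈ Finset.range m, C :=
                Finset.sum_le_sum fun i _ => hCd _ _
            _ = (m : ℝ) * C := by
                rw [Finset.sum_const, Finset.card_range, nsmul_eq_mul]
        unfold avgDist
        calc (m : ℝ)⁻¹ * ∑ i ∈ Finset.range m, dist (T^[i] a) (T^[i] b)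
            ≤ (m : ℝ)⁻¹ * ((m : ℝ) * C) :=
              mul_le_mul_of_nonneg_left hsum (by positivity)
          _ = C := by field_simp
    have key : ∀ ε > 0, ∃ k : ℕ, dist (T^[k] x) (T^[k] y) < ε := by
      intro ε hε
      obtain ⟨δ, hδ, hmean⟩ := h (ε / 6) (by linarith)
      obtain ⟨x', y', hx', hy', n, hn⟩ := hrp δ hδ
      obtain ⟨M₁, hM₁⟩ := eventually_avgDist_lt T x x' (hub x x') (hmean x x' hx')
      obtain ⟨M₂, hM₂⟩ := eventually_avgDist_lt T y' y (hub y' y)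
        (hmean y' y (by rw [dist_comm]; exact hy'))
      obtain ⟨M₃, hM₃⟩ := eventually_avgDist_lt T (T^[n] x') (T^[n] y')
        (hub _ _) (hmean _ _ hn)
      obtain ⟨m, hmdef⟩ : ∃ m : ℕ, m = M₁ + M₂ + M₃ + n + 1 := ⟨_, rfl⟩
      have hmpos : 0 < m := by omega
      have hnm : n ≤ m := by omega
      have h1 : ∑ i ∈ Finset.range (n + m), dist (T^[i] x) (T^[i] x')
          < ((n + m : ℕ) : ℝ) * (ε / 6) :=
        sum_dist_lt T x x' (by omega) (hM₁ (n + m) (by omega))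
      have h2 : ∑ i ∈ Finset.range (n + m), dist (T^[i] y') (T^[i] y)
          < ((n + m : ℕ) : ℝ) * (ε / 6) :=
        sum_dist_lt T y' y (by omega) (hM₂ (n + m) (by omega))
      have h3 : ∑ j ∈ Finset.range m, dist (T^[j] (T^[n] x')) (T^[j] (T^[n] y'))
          < (m : ℝ) * (ε / 6) :=
        sum_dist_lt T (T^[n] x') (T^[n] y') hmpos (hM₃ m (by omega))
      have hs1 : ∑ j ∈ Finset.range m, dist (T^[j + n] x) (T^[j + n] x')
          ≤ ∑ i ∈ Finset.range (n + m), dist (T^[i] x) (T^[i] x') :=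
        shift_sum_le (fun i => dist (T^[i] x) (T^[i] x')) (fun i => dist_nonneg) n m
      have hs2 : ∑ j ∈ Finset.range m, dist (T^[j + n] y') (T^[j + n] y)
          ≤ ∑ i ∈ Finset.range (n + m), dist (T^[i] y') (T^[i] y) :=
        shift_sum_le (fun i => dist (T^[i] y') (T^[i] y)) (fun i => dist_nonneg) n m
      have htri : ∑ j ∈ Finset.range m, dist (T^[j + n] x) (T^[j + n] y)
          ≤ ∑ j ∈ Finset.range m, dist (T^[j + n] x) (T^[j + n] x')
            + ∑ j ∈ Finset.range m, dist (T^[j] (T^[n] x')) (T^[j] (T^[n] y'))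
            + ∑ j ∈ Finset.range m, dist (T^[j + n] y') (T^[j + n] y) := by
        rw [← Finset.sum_add_distrib, ← Finset.sum_add_distrib]
        apply Finset.sum_le_sum
        intro j _
        have e1 : T^[j + n] x' = T^[j] (T^[n] x') := Function.iterate_add_apply T j n x'
        have e2 : T^[j + n] y' = T^[j] (T^[n] y') := Function.iterate_add_apply T j n y'
        calc dist (T^[j + n] x) (T^[j + n] y)
            ≤ dist (T^[j + n] x) (T^[j + n] x') + dist (T^[j + n] x') (T^[j + n] y')
              + dist (T^[j + n] y') (T^[j + n] y) := dist_triangle4 _ _ _ _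
          _ = _ := by rw [e1, e2]
      have hmr : (n : ℝ) ≤ (m : ℝ) := by exact_mod_cast hnm
      have hm1 : (1 : ℝ) ≤ (m : ℝ) := by exact_mod_cast hmpos
      have hcast : ((n + m : ℕ) : ℝ) = (n : ℝ) + (m : ℝ) := by push_cast; ring
      have htot : ∑ j ∈ Finset.range m, dist (T^[j + n] x) (T^[j + n] y)
          < (m : ℝ) * ε := by
        rw [hcast] at h1 h2
        nlinarith [hs1, hs2, h1, h2, h3, htri]
      have hconst : ∑ _j ∈ Finset.range m, ε = (m : ℝ) * ε := by
        rw [Finset.sum_const, Finset.card_range, nsmul_eq_mul]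
      obtain ⟨j, _, hj⟩ := Finset.exists_lt_of_sum_lt
        (f := fun j => dist (T^[j + n] x) (T^[j + n] y)) (g := fun _ => ε)
        (s := Finset.range m) (by rw [hconst]; exact htot)
      exact ⟨j + n, hj⟩
    have hle : (⨅ n : ℕ, dist (T^[n] x) (T^[n] y)) ≤ 0 := by
      apply le_of_forall_pos_le_add
      intro ε hε
      obtain ⟨k, hk⟩ := key ε hε
      calc (⨅ n : ℕ, dist (T^[n] x) (T^[n] y)) ≤ dist (T^[k] x) (T^[k] y) :=
            ciInf_le hbdd k
        _ ≤ 0 + ε := by linarith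
    have hge : 0 ≤ (⨅ n : ℕ, dist (T^[n] x) (T^[n] y)) :=
      Real.iInf_nonneg fun n => dist_nonneg
    linarith
  · intro h0 ε hε
    have : (⨅ n : ℕ, dist (T^[n] x) (T^[n] y)) < ε := by rw [h0]; exact hε
    obtain ⟨n, hn⟩ := exists_lt_of_ciInf_lt this
    exact ⟨x, y, by simpa using hε, by simpa using hε, n, hn⟩
end

section
/- If (X,T) is mean equicontinuous and every proximal pair is a pair of equal points (i.e., (X,T) is distal), then (X,T) is equicontinuous. -/
open Filter Topology MeasureTheory
open scoped Classical

section Aux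
variable {X : Type*} [MetricSpace X] (T : X → X)

lemma avgDist_nonneg_s6 (x y : X) (n : ℕ) : 0 ≤ avgDist T x y n :=
  mul_nonneg (inv_nonneg.2 (Nat.cast_nonneg n))
    (Finset.sum_nonneg fun _ _ => dist_nonneg)

lemma avgDist_le {x y : X} {C : ℝ} (hC0 : 0 ≤ C)
    (hC : ∀ i, dist (T^[i] x) (T^[i] y) ≤ C) (n : ℕ) : avgDist T x y n ≤ C := by
  rcases n with _ | m
  · simpa [avgDist] using hC0
  · have hn : ((m + 1 : ℕ) : ℝ) ≠ 0 := by positivity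
    have hsum : ∑ i ∈ Finset.range (m + 1), dist (T^[i] x) (T^[i] y)
        ≤ ((m + 1 : ℕ) : ℝ) * C := by
      have := Finset.sum_le_card_nsmul (Finset.range (m + 1))
        (fun i => dist (T^[i] x) (T^[i] y)) C (fun i _ => hC i)
      simpa [Finset.card_range, nsmul_eq_mul] using this
    calc avgDist T x y (m + 1)
        ≤ ((m + 1 : ℕ) : ℝ)⁻¹ * (((m + 1 : ℕ) : ℝ) * C) := by
          unfold avgDist
          push_cast
          push_cast at hsum
          exact mul_le_mul_of_nonneg_left hsum (by positivity)
      _ = C := by field_simp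

lemma avgDist_comm (x y : X) : avgDist T x y = avgDist T y x := by
  funext n; simp [avgDist, dist_comm]

lemma avgDist_triangle (x y z : X) (n : ℕ) :
    avgDist T x z n ≤ avgDist T x y n + avgDist T y z n := by
  unfold avgDist
  rw [← mul_add, ← Finset.sum_add_distrib]
  refine mul_le_mul_of_nonneg_left ?_ (by positivity)
  exact Finset.sum_le_sum fun i _ => dist_triangle _ (T^[i] y) _

end Aux

section Aux2
variable {X : Type*} [MetricSpace X] (T : X → X) {C : ℝ}

lemma limsup_avg_triangle (hC0 : 0 ≤ C) (hC : ∀ a b : X, dist a b ≤ C) (x y z : X) :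
    limsup (avgDist T x z) atTop ≤
      limsup (avgDist T x y) atTop + limsup (avgDist T y z) atTop := by
  have hBU : ∀ a b : X, IsBoundedUnder (· ≤ ·) atTop (avgDist T a b) :=
    fun a b => isBoundedUnder_of ⟨C, fun n => avgDist_le T hC0 (fun i => hC _ _) n⟩
  have hBL : ∀ a b : X, IsBoundedUnder (· ≥ ·) atTop (avgDist T a b) :=
    fun a b => isBoundedUnder_of ⟨0, fun n => avgDist_nonneg_s6 T a b n⟩
  have h1 : limsup (avgDist T x z) atTop ≤ limsup (avgDist T x y + avgDist T y z) atTop :=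
    limsup_le_limsup (Eventually.of_forall fun n => avgDist_triangle T x y z n)
      ((hBL x z).isCoboundedUnder_le) (isBoundedUnder_le_add (hBU x y) (hBU y z))
  exact h1.trans (limsup_add_le (hBL x y) (hBU x y)
    ((hBL y z).isCoboundedUnder_le) (hBU y z))

lemma limsup_avg_lower (hC0 : 0 ≤ C) (hC : ∀ a b : X, dist a b ≤ C) (x y : X) :
    (⨅ n : ℕ, dist (T^[n] x) (T^[n] y)) ≤ limsup (avgDist T x y) atTop := by
  set η := ⨅ n : ℕ, dist (T^[n] x) (T^[n] y) with hη
  have hbdd : BddBelow (Set.range fun n : ℕ => dist (T^[n] x) (T^[n] y)) := by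
    refine ⟨0, ?_⟩; rintro _ ⟨i, rfl⟩; exact dist_nonneg
  refine le_limsup_of_frequently_le ?_
    (isBoundedUnder_of ⟨C, fun n => avgDist_le T hC0 (fun i => hC _ _) n⟩)
  refine (eventually_atTop.2 ⟨1, fun n hn => ?_⟩).frequently
  have hn0 : (0:ℝ) < (n : ℝ) := by exact_mod_cast hn
  have hsum : ((n : ℕ) : ℝ) * η ≤ ∑ i ∈ Finset.range n, dist (T^[i] x) (T^[i] y) := by
    have := Finset.card_nsmul_le_sum (Finset.range n)
      (fun i => dist (T^[i] x) (T^[i] y)) η (fun i _ => ciInf_le hbdd i)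
    simpa [Finset.card_range, nsmul_eq_mul] using this
  have : (n : ℝ)⁻¹ * ((n : ℝ) * η) ≤ avgDist T x y n :=
    mul_le_mul_of_nonneg_left hsum (by positivity)
  calc η = (n : ℝ)⁻¹ * ((n : ℝ) * η) := by field_simp
    _ ≤ avgDist T x y n := this

end Aux2

section Aux3
variable {X : Type*} [MetricSpace X] (T : X → X) {C : ℝ}

lemma limsup_avg_step (hC0 : 0 ≤ C) (hC : ∀ a b : X, dist a b ≤ C) (x y : X) :
    limsup (avgDist T (T x) (T y)) atTop ≤ limsup (avgDist T x y) atTop := by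
  set g := avgDist T x y with hg
  have hbu : ∀ a b : X, IsBoundedUnder (· ≤ ·) atTop (avgDist T a b) :=
    fun a b => isBoundedUnder_of ⟨C, fun n => avgDist_le T hC0 (fun i => hC _ _) n⟩
  have hbl : ∀ a b : X, IsBoundedUnder (· ≥ ·) atTop (avgDist T a b) :=
    fun a b => isBoundedUnder_of ⟨0, fun n => avgDist_nonneg_s6 T a b n⟩
  have hgC : ∀ m, g m ≤ C := fun m => avgDist_le T hC0 (fun i => hC _ _) m
  have hg0 : ∀ m, 0 ≤ g m := fun m => avgDist_nonneg_s6 T x y m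
  have hinv : ∀ n : ℕ, ((n : ℝ))⁻¹ ≤ 1 := by
    intro n
    rcases n with _ | m
    · simp
    · exact inv_le_one_of_one_le₀ (by exact_mod_cast Nat.succ_le_succ (Nat.zero_le m))
  have key : ∀ n : ℕ, 1 ≤ n → avgDist T (T x) (T y) n ≤ g (n + 1) + C * (n : ℝ)⁻¹ := by
    intro n hn
    have hn0 : (0 : ℝ) < n := by exact_mod_cast hn
    have hterm : ∀ i, dist (T^[i] (T x)) (T^[i] (T y)) = dist (T^[i+1] x) (T^[i+1] y) := by
      intro i; rw [← Function.iterate_succ_apply, ← Function.iterate_succ_apply]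
    have hsum : ∑ i ∈ Finset.range n, dist (T^[i] (T x)) (T^[i] (T y))
        ≤ ∑ i ∈ Finset.range (n + 1), dist (T^[i] x) (T^[i] y) := by
      rw [Finset.sum_range_succ']
      simp only [hterm]
      exact le_add_of_nonneg_right dist_nonneg
    have h1 : avgDist T (T x) (T y) n
        ≤ (n : ℝ)⁻¹ * ∑ i ∈ Finset.range (n + 1), dist (T^[i] x) (T^[i] y) :=
      mul_le_mul_of_nonneg_left hsum (by positivity)
    have hsumEq : ∑ i ∈ Finset.range (n + 1), dist (T^[i] x) (T^[i] y)
        = ((n : ℝ) + 1) * g (n + 1) := by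
      rw [hg]; unfold avgDist; push_cast; field_simp
    calc avgDist T (T x) (T y) n
        ≤ (n : ℝ)⁻¹ * (((n : ℝ) + 1) * g (n + 1)) := by rw [← hsumEq]; exact h1
      _ = g (n + 1) + (n : ℝ)⁻¹ * g (n + 1) := by
          rw [show ((n : ℝ) + 1) * g (n + 1) = (n : ℝ) * g (n + 1) + g (n + 1) by ring,
            mul_add, ← mul_assoc, inv_mul_cancel₀ hn0.ne', one_mul]
      _ ≤ g (n + 1) + C * (n : ℝ)⁻¹ := by
          have h2 : (n : ℝ)⁻¹ * g (n + 1) ≤ (n : ℝ)⁻¹ * C :=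
            mul_le_mul_of_nonneg_left (hgC _) (by positivity)
          nlinarith [h2]
  have hshift : limsup (fun n => g (n + 1)) atTop = limsup g atTop := by
    have he : (fun n : ℕ => g (n + 1)) = g ∘ (fun n => n + 1) := rfl
    rw [he, limsup_comp, Filter.map_add_atTop_eq_nat]
  have hzero : Tendsto (fun n : ℕ => C * (n : ℝ)⁻¹) atTop (𝓝 0) := by
    have h1 : Tendsto (fun n : ℕ => ((n : ℝ))⁻¹) atTop (𝓝 0) :=
      tendsto_inv_atTop_zero.comp tendsto_natCast_atTop_atTop
    simpa using h1.const_mul C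
  have hvU : IsBoundedUnder (· ≤ ·) atTop (fun n : ℕ => C * (n : ℝ)⁻¹) :=
    isBoundedUnder_of ⟨C, fun n => by
      simpa using mul_le_mul_of_nonneg_left (hinv n) hC0⟩
  have hvL : IsBoundedUnder (· ≥ ·) atTop (fun n : ℕ => C * (n : ℝ)⁻¹) :=
    isBoundedUnder_of ⟨0, fun n => by positivity⟩
  have hgsU : IsBoundedUnder (· ≤ ·) atTop (fun n : ℕ => g (n + 1)) :=
    isBoundedUnder_of ⟨C, fun n => hgC _⟩
  have hgsL : IsBoundedUnder (· ≥ ·) atTop (fun n : ℕ => g (n + 1)) :=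
    isBoundedUnder_of ⟨0, fun n => hg0 _⟩
  have hle1 : limsup (avgDist T (T x) (T y)) atTop
      ≤ limsup ((fun n => g (n + 1)) + fun n : ℕ => C * (n : ℝ)⁻¹) atTop := by
    refine limsup_le_limsup ?_ ((hbl (T x) (T y)).isCoboundedUnder_le)
      (isBoundedUnder_le_add hgsU hvU)
    exact eventually_atTop.2 ⟨1, fun n hn => key n hn⟩
  have hle2 : limsup ((fun n => g (n + 1)) + fun n : ℕ => C * (n : ℝ)⁻¹) atTop
      ≤ limsup (fun n => g (n + 1)) atTop + limsup (fun n : ℕ => C * (n : ℝ)⁻¹) atTop :=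
    limsup_add_le hgsL hgsU (hvL.isCoboundedUnder_le) hvU
  calc limsup (avgDist T (T x) (T y)) atTop
      ≤ _ := hle1
    _ ≤ _ := hle2
    _ = limsup g atTop := by rw [hshift, hzero.limsup_eq, add_zero]

lemma limsup_avg_iterate (hC0 : 0 ≤ C) (hC : ∀ a b : X, dist a b ≤ C) (x y : X) (n : ℕ) :
    limsup (avgDist T (T^[n] x) (T^[n] y)) atTop ≤ limsup (avgDist T x y) atTop := by
  induction n with
  | zero => simp
  | succ m ih =>
      rw [Function.iterate_succ_apply', Function.iterate_succ_apply']
      exact (limsup_avg_step T hC0 hC _ _).trans ih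

end Aux3
theorem equicontinuous_of_meanEquicontinuous_distal
    {X : Type*} [MetricSpace X] [CompactSpace X] (T : X → X) (hT : Continuous T)
    (h : MeanEquicontinuous T)
    (hd : ∀ x y : X, x ≠ y → 0 < ⨅ n : ℕ, dist (T^[n] x) (T^[n] y)) :
    ∀ ε > 0, ∃ δ > 0, ∀ x y : X, dist x y < δ → ∀ n : ℕ,
      dist (T^[n] x) (T^[n] y) < ε := by
  by_contra hcon
  push_neg at hcon
  obtain ⟨ε, hε, hcon⟩ := hcon
  have H : ∀ k : ℕ, ∃ x y : X, dist x y < ((k : ℝ) + 1)⁻¹ ∧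
      ∃ n, ε ≤ dist (T^[n] x) (T^[n] y) := fun k => hcon (((k : ℝ) + 1)⁻¹) (by positivity)
  choose x y hxy n hn using H
  set u : ℕ → X := fun k => T^[n k] (x k) with hu_def
  set v : ℕ → X := fun k => T^[n k] (y k) with hv_def
  obtain ⟨a, -, φ, hφ, hu⟩ := isCompact_univ.tendsto_subseq (fun k => Set.mem_univ (u k))
  obtain ⟨b, -, ψ, hψ, hv⟩ := isCompact_univ.tendsto_subseq
    (x := v ∘ φ) (fun k => Set.mem_univ ((v ∘ φ) k))
  set σ : ℕ → ℕ := fun k => φ (ψ k) with hσ_def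
  have hσmono : StrictMono σ := hφ.comp hψ
  have hu' : Filter.Tendsto (fun k => u (σ k)) Filter.atTop (nhds a) :=
    hu.comp hψ.tendsto_atTop
  have hv' : Filter.Tendsto (fun k => v (σ k)) Filter.atTop (nhds b) := hv
  have hab : ε ≤ dist a b := by
    have hdist : Filter.Tendsto (fun k => dist (u (σ k)) (v (σ k))) Filter.atTop
        (nhds (dist a b)) := hu'.dist hv'
    exact ge_of_tendsto' hdist fun k => hn (σ k)
  have hne : a ≠ b := by
    intro hab'
    rw [hab'] at hab
    simp only [dist_self] at hab
    linarith
  set η := ⨅ n : ℕ, dist (T^[n] a) (T^[n] b) with hη_def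
  have hη : 0 < η := hd a b hne
  obtain ⟨C, hCbound⟩ := Metric.isBounded_iff.1
    (isCompact_univ : IsCompact (Set.univ : Set X)).isBounded
  have hC : ∀ p q : X, dist p q ≤ C :=
    fun p q => hCbound (Set.mem_univ p) (Set.mem_univ q)
  have hC0 : 0 ≤ C := le_trans dist_nonneg (hC a a)
  obtain ⟨δ, hδ, hmean⟩ := h (η / 3) (by positivity)
  have e1 : ∀ᶠ k in Filter.atTop, dist (u (σ k)) a < δ :=
    hu'.eventually (Metric.ball_mem_nhds a hδ)
  have e2 : ∀ᶠ k in Filter.atTop, dist (v (σ k)) b < δ :=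
    hv'.eventually (Metric.ball_mem_nhds b hδ)
  have e3 : ∀ᶠ k in Filter.atTop, ((σ k : ℝ) + 1)⁻¹ ≤ δ := by
    obtain ⟨K, hK⟩ := exists_nat_gt δ⁻¹
    refine Filter.eventually_atTop.2 ⟨K, fun k hk => ?_⟩
    have h1 : (K : ℝ) ≤ (σ k : ℝ) + 1 := by
      have : (k : ℝ) ≤ (σ k : ℝ) := by exact_mod_cast hσmono.le_apply
      have : (K : ℝ) ≤ (k : ℝ) := by exact_mod_cast hk
      linarith
    have h2 : δ⁻¹ < (σ k : ℝ) + 1 := lt_of_lt_of_le hK h1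
    have h3 : ((σ k : ℝ) + 1)⁻¹ < δ := (inv_lt_comm₀ hδ (by positivity)).1 h2
    exact h3.le
  obtain ⟨k, h1, h2, h3⟩ := (e1.and (e2.and e3)).exists
  obtain ⟨h2, h3⟩ := (⟨h2, h3⟩ : _ ∧ _)
  have hwz : dist (x (σ k)) (y (σ k)) < δ := (hxy (σ k)).trans_le h3
  have hDwz : Filter.limsup (avgDist T (x (σ k)) (y (σ k))) Filter.atTop < η / 3 :=
    hmean _ _ hwz
  have hDpq : Filter.limsup (avgDist T (u (σ k)) (v (σ k))) Filter.atTop < η / 3 :=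
    lt_of_le_of_lt (limsup_avg_iterate T hC0 hC (x (σ k)) (y (σ k)) (n (σ k))) hDwz
  have hDap : Filter.limsup (avgDist T a (u (σ k))) Filter.atTop < η / 3 :=
    hmean _ _ (by rw [dist_comm]; exact h1)
  have hDqb : Filter.limsup (avgDist T (v (σ k)) b) Filter.atTop < η / 3 :=
    hmean _ _ h2
  have htri1 : Filter.limsup (avgDist T a b) Filter.atTop ≤
      Filter.limsup (avgDist T a (u (σ k))) Filter.atTop +
      Filter.limsup (avgDist T (u (σ k)) b) Filter.atTop :=
    limsup_avg_triangle T hC0 hC a (u (σ k)) b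
  have htri2 : Filter.limsup (avgDist T (u (σ k)) b) Filter.atTop ≤
      Filter.limsup (avgDist T (u (σ k)) (v (σ k))) Filter.atTop +
      Filter.limsup (avgDist T (v (σ k)) b) Filter.atTop :=
    limsup_avg_triangle T hC0 hC (u (σ k)) (v (σ k)) b
  have hlow : η ≤ Filter.limsup (avgDist T a b) Filter.atTop :=
    limsup_avg_lower T hC0 hC a b
  linarith
end

section
/- A minimal system that has at least one mean equicontinuous point is mean equicontinuous. -/
open Filter Topology MeasureTheory
open scoped Classical

theorem minimal_almost_meanEquicontinuous_is_meanEquicontinuous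
    {X : Type*} [MetricSpace X] [CompactSpace X] (T : X → X) (hT : Continuous T)
    (hmin : ∀ x : X, Dense (Set.range fun n : ℕ => T^[n] x))
    (h : ∃ x : X, MeanEqPtAt T x) :
    MeanEquicontinuous T := by
  obtain ⟨x₀, hx₀⟩ := h
  -- basic facts about avgDist
  have hnn : ∀ x y : X, ∀ n, 0 ≤ avgDist T x y n := by
    intro x y n; unfold avgDist; positivity
  have hdiam : ∀ a b : X, dist a b ≤ Metric.diam (Set.univ : Set X) := fun a b =>
    Metric.dist_le_diam_of_mem isCompact_univ.isBounded trivial trivial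
  have hub : ∀ x y : X, ∀ n, avgDist T x y n ≤ Metric.diam (Set.univ : Set X) := by
    intro x y n
    unfold avgDist
    rcases Nat.eq_zero_or_pos n with h0 | h0
    · simpa [h0] using Metric.diam_nonneg
    calc (n : ℝ)⁻¹ * ∑ i ∈ Finset.range n, dist (T^[i] x) (T^[i] y)
        ≤ (n : ℝ)⁻¹ * ∑ _i ∈ Finset.range n, Metric.diam (Set.univ : Set X) := by
          gcongr with i hi
          exact hdiam _ _
      _ = Metric.diam (Set.univ : Set X) := by
          rw [Finset.sum_const, Finset.card_range, nsmul_eq_mul, ← mul_assoc,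
            inv_mul_cancel₀ (by exact_mod_cast h0.ne'), one_mul]
  have hbddAbove : ∀ x y : X, Filter.IsBoundedUnder (· ≤ ·) Filter.atTop (avgDist T x y) :=
    fun x y => Filter.isBoundedUnder_of ⟨Metric.diam (Set.univ : Set X), hub x y⟩
  have hcobdd : ∀ x y : X, Filter.IsCoboundedUnder (· ≤ ·) Filter.atTop (avgDist T x y) :=
    fun x y =>
      Filter.IsBoundedUnder.isCoboundedUnder_le
        (Filter.isBoundedUnder_of ⟨0, fun n => (hnn x y n : (0:ℝ) ≤ _)⟩)
  have htri : ∀ a b c : X, ∀ n, avgDist T a c n ≤ avgDist T a b n + avgDist T b c n := by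
    intro a b c n
    unfold avgDist
    rw [← mul_add, ← Finset.sum_add_distrib]
    refine mul_le_mul_of_nonneg_left (Finset.sum_le_sum fun i _ => ?_) (by positivity)
    exact dist_triangle _ _ _
  have hsymm : ∀ a b : X, avgDist T a b = avgDist T b a := by
    intro a b; funext n; unfold avgDist; simp [dist_comm]
  intro ε hε
  obtain ⟨δ₀, hδ₀, hball⟩ := hx₀ (ε / 8) (by positivity)
  have horbit : ∀ z : X, ∃ n : ℕ, dist (T^[n] z) x₀ < δ₀ := by
    intro z
    rcases Metric.mem_closure_iff.1 ((hmin z) x₀) δ₀ hδ₀ with ⟨b, ⟨n, rfl⟩, hb⟩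
    exact ⟨n, by rwa [dist_comm]⟩
  choose N hN using horbit
  set U : X → Set X := fun z => (T^[N z]) ⁻¹' Metric.ball x₀ δ₀ with hU
  have hUopen : ∀ z, IsOpen (U z) := fun z => Metric.isOpen_ball.preimage (hT.iterate _)
  have hUcover : (Set.univ : Set X) ⊆ ⋃ z, U z := fun z _ =>
    Set.mem_iUnion.2 ⟨z, by simpa [U, Metric.mem_ball] using hN z⟩
  obtain ⟨δ, hδ, hleb⟩ := lebesgue_number_lemma_of_metric isCompact_univ hUopen hUcover
  refine ⟨δ, hδ, fun x y hxy => ?_⟩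
  obtain ⟨z, hz⟩ := hleb x trivial
  have hx : x ∈ U z := hz (Metric.mem_ball_self hδ)
  have hy : y ∈ U z := hz (by simpa [Metric.mem_ball, dist_comm] using hxy)
  set n := N z with hn
  set a := T^[n] x with hadef
  set b := T^[n] y with hbdef
  have hax₀ : dist x₀ a < δ₀ := by
    have := hx; simp only [U, Set.mem_preimage, Metric.mem_ball] at this
    rwa [dist_comm] at this
  have hbx₀ : dist x₀ b < δ₀ := by
    have := hy; simp only [U, Set.mem_preimage, Metric.mem_ball] at this
    rwa [dist_comm] at this
  have ha : Filter.limsup (avgDist T x₀ a) Filter.atTop < ε / 8 := hball a hax₀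
  have hb' : Filter.limsup (avgDist T x₀ b) Filter.atTop < ε / 8 := hball b hbx₀
  have ha' : ∀ᶠ k in Filter.atTop, avgDist T x₀ a k < ε / 8 :=
    Filter.eventually_lt_of_limsup_lt ha (hbddAbove _ _)
  have hb'' : ∀ᶠ k in Filter.atTop, avgDist T x₀ b k < ε / 8 :=
    Filter.eventually_lt_of_limsup_lt hb' (hbddAbove _ _)
  have hab : ∀ᶠ k in Filter.atTop, avgDist T a b k < ε / 4 := by
    filter_upwards [ha', hb''] with k h1 h2
    calc avgDist T a b k ≤ avgDist T a x₀ k + avgDist T x₀ b k := htri _ _ _ _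
      _ = avgDist T x₀ a k + avgDist T x₀ b k := by rw [hsymm a x₀]
      _ < ε / 8 + ε / 8 := add_lt_add h1 h2
      _ = ε / 4 := by ring
  set C : ℝ := ∑ i ∈ Finset.range n, dist (T^[i] x) (T^[i] y) with hC
  have hsplit : ∀ k : ℕ, avgDist T x y (n + k) ≤ ((n + k : ℕ) : ℝ)⁻¹ * C + avgDist T a b k := by
    intro k
    have hsum : (∑ i ∈ Finset.range k, dist (T^[n + i] x) (T^[n + i] y))
        = ∑ i ∈ Finset.range k, dist (T^[i] a) (T^[i] b) := by
      refine Finset.sum_congr rfl fun i _ => ?_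
      rw [hadef, hbdef, ← Function.iterate_add_apply, ← Function.iterate_add_apply, add_comm i n]
    have key : avgDist T x y (n + k) = ((n + k : ℕ) : ℝ)⁻¹ * C
        + ((n + k : ℕ) : ℝ)⁻¹ * ∑ i ∈ Finset.range k, dist (T^[i] a) (T^[i] b) := by
      unfold avgDist
      rw [Finset.sum_range_add, mul_add, hsum]
    rw [key]
    have h2 : ((n + k : ℕ) : ℝ)⁻¹ * (∑ i ∈ Finset.range k, dist (T^[i] a) (T^[i] b))
        ≤ avgDist T a b k := by
      unfold avgDist
      rcases Nat.eq_zero_or_pos k with h0 | h0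
      · simp [h0]
      refine mul_le_mul_of_nonneg_right ?_ (by positivity)
      apply inv_anti₀ (by exact_mod_cast h0)
      exact_mod_cast Nat.le_add_left k n
    linarith
  have hCtend : Filter.Tendsto (fun m : ℕ => ((m : ℕ) : ℝ)⁻¹ * C) Filter.atTop (nhds 0) := by
    simpa using tendsto_inv_atTop_nhds_zero_nat.mul_const C
  have hCev : ∀ᶠ m in Filter.atTop, ((m : ℕ) : ℝ)⁻¹ * C < ε / 4 :=
    hCtend.eventually_lt_const (by positivity)
  have hev : ∀ᶠ m in Filter.atTop, avgDist T x y m ≤ ε / 2 := by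
    obtain ⟨K, hK⟩ := Filter.eventually_atTop.1 hab
    obtain ⟨M, hM⟩ := Filter.eventually_atTop.1 hCev
    filter_upwards [Filter.eventually_ge_atTop (n + K + M)] with m hm
    have hmn : n ≤ m := le_trans (by omega) hm
    have hmk : m = n + (m - n) := by omega
    have hKk : K ≤ m - n := by omega
    have hMm : M ≤ m := by omega
    calc avgDist T x y m = avgDist T x y (n + (m - n)) := by rw [← hmk]
      _ ≤ ((n + (m - n) : ℕ) : ℝ)⁻¹ * C + avgDist T a b (m - n) := hsplit _
      _ = ((m : ℕ) : ℝ)⁻¹ * C + avgDist T a b (m - n) := by rw [← hmk]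
      _ ≤ ε / 4 + ε / 4 := add_le_add (le_of_lt (hM m hMm)) (le_of_lt (hK _ hKk))
      _ = ε / 2 := by ring
  have : Filter.limsup (avgDist T x y) Filter.atTop ≤ ε / 2 :=
    Filter.limsup_le_of_le (hcobdd x y) hev
  linarith
end

section
/- If π: (X,T) → (Y,S) is a factor map, x ∈ X is a mean equicontinuous point, and π is open at x (for every neighborhood U of x, π(U) is a neighborhood of π(x)), then π(x) is a mean equicontinuous point of (Y,S). -/
open Filter Topology MeasureTheory
open scoped Classical

theorem meanEqPt_image_of_open_at_point
    {X Y : Type*} [MetricSpace X] [CompactSpace X] [MetricSpace Y] [CompactSpace Y]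
    (T : X → X) (S : Y → Y) (hT : Continuous T) (hS : Continuous S)
    (π : X → Y) (hπ : Continuous π) (hsurj : Function.Surjective π)
    (hcomm : π ∘ T = S ∘ π)
    (x : X) (hx : MeanEqPtAt T x)
    (hopen : ∀ U ∈ nhds x, π '' U ∈ nhds (π x)) :
    MeanEqPtAt S (π x) := by
  intro ε hε
  have huc := CompactSpace.uniformContinuous_of_continuous hπ
  rw [Metric.uniformContinuous_iff] at huc
  obtain ⟨η, hη, hmod⟩ := huc (ε / 3) (by positivity)
  set D := Metric.diam (Set.univ : Set Y) with hDdef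
  have hD0 : 0 ≤ D := Metric.diam_nonneg
  have hDle : ∀ a b : Y, dist a b ≤ D := fun a b =>
    Metric.dist_le_diam_of_mem isCompact_univ.isBounded (Set.mem_univ a) (Set.mem_univ b)
  set D' := max D 1 with hD'def
  have hD'pos : 0 < D' := lt_of_lt_of_le one_pos (le_max_right _ _)
  set c := D' / η with hcdef
  have hcpos : 0 < c := div_pos hD'pos hη
  set ε₂ := ε * η / (3 * D') with hε₂def
  have hε₂pos : 0 < ε₂ := by positivity
  obtain ⟨δ₀, hδ₀, hmean⟩ := hx ε₂ hε₂pos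
  have hU := hopen (Metric.ball x δ₀) (Metric.ball_mem_nhds x hδ₀)
  rw [Metric.mem_nhds_iff] at hU
  obtain ⟨δ, hδ, hball⟩ := hU
  refine ⟨δ, hδ, fun y hy => ?_⟩
  obtain ⟨w, hw, rfl⟩ := hball (by simpa [Metric.mem_ball, dist_comm] using hy)
  -- pointwise key inequality
  have key : ∀ a b : X, dist (π a) (π b) ≤ ε / 3 + c * dist a b := by
    intro a b
    by_cases h : dist a b < η
    · have := hmod h
      nlinarith [mul_nonneg hcpos.le (dist_nonneg : (0:ℝ) ≤ dist a b)]
    · push_neg at h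
      have h1 : dist (π a) (π b) ≤ D' := le_trans (hDle _ _) (le_max_left _ _)
      have h2 : D' = c * η := by rw [hcdef, div_mul_cancel₀ _ hη.ne']
      have h3 : c * η ≤ c * dist a b := mul_le_mul_of_nonneg_left h hcpos.le
      nlinarith [div_nonneg (by positivity : (0:ℝ) ≤ ε) (by norm_num : (0:ℝ) ≤ 3)]
  have hsemi : Function.Semiconj π T S := fun a => congrFun hcomm a
  have hiter : ∀ i (z : X), π (T^[i] z) = S^[i] (π z) := fun i z =>
    (hsemi.iterate_right i) z
  have hxw : dist x w < δ₀ := by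
    have := hw; rw [Metric.mem_ball, dist_comm] at this; exact this
  have hmw := hmean w hxw
  have hbdd : IsBoundedUnder (· ≤ ·) atTop (avgDist T x w) := by
    refine isBoundedUnder_of ⟨Metric.diam (Set.univ : Set X), fun n => ?_⟩
    rcases Nat.eq_zero_or_pos n with h | h
    · simp [h, avgDist, Metric.diam_nonneg]
    · have hn0 : (0:ℝ) < n := by exact_mod_cast h
      unfold avgDist
      rw [inv_mul_le_iff₀ hn0]
      calc ∑ i ∈ Finset.range n, dist (T^[i] x) (T^[i] w)
          ≤ ∑ _i ∈ Finset.range n, Metric.diam (Set.univ : Set X) :=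
            Finset.sum_le_sum fun i _ => Metric.dist_le_diam_of_mem
              isCompact_univ.isBounded (Set.mem_univ _) (Set.mem_univ _)
        _ = (n : ℝ) * Metric.diam (Set.univ : Set X) := by
            simp [Finset.sum_const, Finset.card_range]
  have hev : ∀ᶠ n in atTop, avgDist T x w n < ε₂ :=
    eventually_lt_of_limsup_lt hmw hbdd
  have hle : ∀ᶠ n in atTop, avgDist S (π x) (π w) n ≤ ε / 3 + c * ε₂ := by
    filter_upwards [hev, eventually_ge_atTop 1] with n hn hn1
    have hn0 : (0:ℝ) < n := by exact_mod_cast hn1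
    have hsum : ∑ i ∈ Finset.range n, dist (S^[i] (π x)) (S^[i] (π w)) ≤
        ∑ i ∈ Finset.range n, (ε / 3 + c * dist (T^[i] x) (T^[i] w)) := by
      apply Finset.sum_le_sum
      intro i _
      rw [← hiter i x, ← hiter i w]
      exact key _ _
    have : avgDist S (π x) (π w) n ≤ ε / 3 + c * avgDist T x w n := by
      unfold avgDist
      rw [Finset.sum_add_distrib, Finset.sum_const, Finset.card_range,
        ← Finset.mul_sum] at hsum
      have h4 := mul_le_mul_of_nonneg_left hsum (inv_nonneg.mpr hn0.le)
      calc (n : ℝ)⁻¹ * ∑ i ∈ Finset.range n, dist (S^[i] (π x)) (S^[i] (π w))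
          ≤ (n : ℝ)⁻¹ * (n • (ε / 3) + c * ∑ i ∈ Finset.range n, dist (T^[i] x) (T^[i] w)) := h4
        _ = ε / 3 + c * ((n:ℝ)⁻¹ * ∑ i ∈ Finset.range n, dist (T^[i] x) (T^[i] w)) := by
            rw [nsmul_eq_mul]; field_simp
    refine this.trans ?_
    have := mul_le_mul_of_nonneg_left hn.le hcpos.le
    linarith
  have hcob : IsCoboundedUnder (· ≤ ·) atTop (avgDist S (π x) (π w)) :=
    isCoboundedUnder_le_of_eventually_le atTop
      (Eventually.of_forall fun n => avgDist_nonneg S (π x) (π w) n)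
  have hlims : limsup (avgDist S (π x) (π w)) atTop ≤ ε / 3 + c * ε₂ :=
    limsup_le_of_le hcob hle
  refine lt_of_le_of_lt hlims ?_
  have hcε₂ : c * ε₂ = ε / 3 := by
    rw [hcdef, hε₂def]
    field_simp
  linarith
end

section
/- If a set S ⊆ ℕ has positive upper Banach density, then for every k ≥ 1 and ε > 0 there is N such that any set of n ≥ N natural numbers s_1 < ⋯ < s_n contains indices t_1 < ⋯ < t_k with BD*((S−s_{t_1}) ∩ ⋯ ∩ (S−s_{t_k})) ≥ (BD*(S))^k − ε. -/
open Filter Topology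
open scoped Classical

noncomputable def wdens (F : Set ℕ) (L M : ℕ) : ℝ :=
  (((Finset.Icc M (M + L)).filter (fun i => i ∈ F)).card : ℝ) / (L + 1)

noncomputable def wsup (F : Set ℕ) (L : ℕ) : ℝ := ⨆ M, wdens F L M

lemma wdens_nonneg (F : Set ℕ) (L M : ℕ) : 0 ≤ wdens F L M := by
  unfold wdens; positivity

lemma wdens_le_one (F : Set ℕ) (L M : ℕ) : wdens F L M ≤ 1 := by
  unfold wdens
  rw [div_le_one (by positivity)]
  calc (((Finset.Icc M (M + L)).filter (fun i => i ∈ F)).card : ℝ)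
      ≤ ((Finset.Icc M (M + L)).card : ℝ) := by
        exact_mod_cast Finset.card_le_card (Finset.filter_subset _ _)
    _ = (L : ℝ) + 1 := by
        rw [Nat.card_Icc, show M + L + 1 - M = L + 1 by omega]; push_cast; ring

lemma wdens_bdd (F : Set ℕ) (L : ℕ) : BddAbove (Set.range (wdens F L)) :=
  ⟨1, by rintro x ⟨M, rfl⟩; exact wdens_le_one F L M⟩

lemma wdens_le_wsup (F : Set ℕ) (L M : ℕ) : wdens F L M ≤ wsup F L :=
  le_ciSup (wdens_bdd F L) M

lemma wsup_le_one (F : Set ℕ) (L : ℕ) : wsup F L ≤ 1 :=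
  ciSup_le fun M => wdens_le_one F L M

lemma wsup_nonneg (F : Set ℕ) (L : ℕ) : 0 ≤ wsup F L :=
  le_trans (wdens_nonneg F L 0) (wdens_le_wsup F L 0)

lemma wsup_bounded (F : Set ℕ) : Filter.IsBoundedUnder (· ≤ ·) atTop (wsup F) :=
  Filter.isBoundedUnder_of ⟨1, fun L => wsup_le_one F L⟩

lemma wsup_boundedge (F : Set ℕ) : Filter.IsBoundedUnder (· ≥ ·) atTop (wsup F) :=
  Filter.isBoundedUnder_of ⟨0, fun L => wsup_nonneg F L⟩

lemma wsup_cobounded (F : Set ℕ) : Filter.IsCoboundedUnder (· ≤ ·) atTop (wsup F) :=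
  (wsup_boundedge F).isCoboundedUnder_le

lemma wsup_coboundedge (F : Set ℕ) : Filter.IsCoboundedUnder (· ≥ ·) atTop (wsup F) :=
  (wsup_bounded F).isCoboundedUnder_ge

noncomputable def upperBanachDensity (F : Set ℕ) : ℝ :=
  Filter.limsup (fun k : ℕ =>
    ⨆ M : ℕ, (((Finset.Icc M (M + k)).filter (fun i => i ∈ F)).card : ℝ) / (k + 1))
    Filter.atTop

lemma uBD_eq (F : Set ℕ) : upperBanachDensity F = Filter.limsup (wsup F) atTop := rfl

lemma uBD_le_one (F : Set ℕ) : upperBanachDensity F ≤ 1 := by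
  rw [uBD_eq]
  exact Filter.limsup_le_of_le (wsup_cobounded F)
    (Filter.Eventually.of_forall fun L => wsup_le_one F L)

lemma uBD_mono {F G : Set ℕ} (h : F ⊆ G) : upperBanachDensity F ≤ upperBanachDensity G := by
  rw [uBD_eq, uBD_eq]
  refine Filter.limsup_le_limsup (Filter.Eventually.of_forall fun L => ?_)
    (wsup_cobounded F) (wsup_bounded G)
  exact ciSup_mono (wdens_bdd G L) fun M => by
    unfold wdens
    gcongr

lemma le_uBD_of_freq {F : Set ℕ} {c : ℝ}
    (h : ∀ L₀ : ℕ, ∃ L, L₀ ≤ L ∧ ∃ M, c ≤ wdens F L M) :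
    c ≤ upperBanachDensity F := by
  rw [uBD_eq]
  refine Filter.le_limsup_of_frequently_le ?_ (wsup_bounded F)
  rw [Filter.frequently_atTop]
  intro a
  obtain ⟨L, hL, M, hM⟩ := h a
  exact ⟨L, hL, le_trans hM (wdens_le_wsup F L M)⟩

lemma uBD_freq {F : Set ℕ} {b : ℝ} (h : b < upperBanachDensity F) :
    ∀ L₀ : ℕ, ∃ L, L₀ ≤ L ∧ ∃ M, b < wdens F L M := by
  rw [uBD_eq] at h
  have := Filter.frequently_lt_of_lt_limsup (wsup_cobounded F) h
  rw [Filter.frequently_atTop] at this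
  intro L₀
  obtain ⟨L, hL, hb⟩ := this L₀
  obtain ⟨M, hM⟩ := exists_lt_of_lt_ciSup hb
  exact ⟨L, hL, M, hM⟩

lemma pow_le_desc (k x : ℕ) : x ^ k ≤ x.descFactorial k + k ^ 2 * x ^ (k - 1) := by
  induction k with
  | zero => simp
  | succ k ih =>
    have h2 : x * x ^ k ≤ x * (x.descFactorial k + k ^ 2 * x ^ (k - 1)) :=
      Nat.mul_le_mul_left x ih
    have h3 : x * x.descFactorial k ≤ (x - k) * x.descFactorial k + k * x ^ k := by
      have hx : x ≤ (x - k) + k := by omega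
      have hd : x.descFactorial k ≤ x ^ k := Nat.descFactorial_le_pow x k
      calc x * x.descFactorial k ≤ ((x - k) + k) * x.descFactorial k :=
            Nat.mul_le_mul_right _ hx
        _ = (x - k) * x.descFactorial k + k * x.descFactorial k := by ring
        _ ≤ (x - k) * x.descFactorial k + k * x ^ k :=
            Nat.add_le_add_left (Nat.mul_le_mul_left k hd) _
    have h4 : k ^ 2 * (x ^ (k - 1) * x) ≤ k ^ 2 * x ^ k := by
      rcases Nat.eq_zero_or_pos k with hk | hk
      · subst hk; simp
      · have hxx : x ^ (k - 1) * x = x ^ k := by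
          rw [← pow_succ]; congr 1; omega
        rw [hxx]
    have hdesc : x.descFactorial (k + 1) = (x - k) * x.descFactorial k :=
      Nat.descFactorial_succ x k
    calc x ^ (k + 1) = x * x ^ k := by ring
      _ ≤ x * (x.descFactorial k + k ^ 2 * x ^ (k - 1)) := h2
      _ = x * x.descFactorial k + k ^ 2 * (x ^ (k - 1) * x) := by ring
      _ ≤ ((x - k) * x.descFactorial k + k * x ^ k) + k ^ 2 * x ^ k := Nat.add_le_add h3 h4
      _ = (x - k) * x.descFactorial k + (k + k ^ 2) * x ^ k := by ring
      _ ≤ x.descFactorial (k + 1) + (k + 1) ^ 2 * x ^ k := by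
          rw [hdesc]
          refine Nat.add_le_add_left (Nat.mul_le_mul_right _ ?_) _
          nlinarith

lemma pow_sub_pow_le {a b : ℝ} (hb : 0 ≤ b) (hba : b ≤ a) (ha : a ≤ 1) (k : ℕ) :
    a ^ k - b ^ k ≤ k * (a - b) := by
  induction k with
  | zero => simp
  | succ k ih =>
    have hbk : b ^ k ≤ a ^ k := pow_le_pow_left₀ hb hba k
    have hak : a ^ k ≤ 1 := pow_le_one₀ (le_trans hb hba) ha
    have hbk0 : 0 ≤ b ^ k := pow_nonneg hb k
    have ha0 : 0 ≤ a := le_trans hb hba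
    have e1 : a * (a ^ k - b ^ k) ≤ a ^ k - b ^ k := by nlinarith
    have e2 : (a - b) * b ^ k ≤ a - b := by nlinarith
    calc a ^ (k + 1) - b ^ (k + 1) = a * (a ^ k - b ^ k) + (a - b) * b ^ k := by ring
      _ ≤ k * (a - b) + (a - b) := by linarith
      _ = (↑(k + 1)) * (a - b) := by push_cast; ring

lemma shift_count (S : Set ℕ) (M L si σ : ℕ) (hsi : si ≤ σ) :
    ((Finset.Icc M (M + L)).filter (fun j => j ∈ S)).card ≤
      ((Finset.Icc (M - σ) (M + L)).filter (fun m => m + si ∈ S)).card + σ := by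
  set A := (Finset.Icc M (M + L)).filter (fun j => j ∈ S) with hA
  have hsplit : A.card ≤ (A.filter (fun j => si ≤ j)).card + σ := by
    have hsub : A.filter (fun j => ¬ si ≤ j) ⊆ Finset.range si := by
      intro j hj
      simp only [Finset.mem_filter, not_le] at hj
      exact Finset.mem_range.2 hj.2
    have hle := Finset.card_le_card hsub
    rw [Finset.card_range] at hle
    have := Finset.card_filter_add_card_filter_not (s := A) (p := fun j => si ≤ j)
    omega
  refine le_trans hsplit (Nat.add_le_add_right ?_ σ)
  apply Finset.card_le_card_of_injOn (fun j => j - si)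
  · intro j hj
    simp only [hA, Finset.mem_coe, Finset.mem_filter, Finset.mem_Icc] at hj ⊢
    obtain ⟨⟨⟨hj1, hj2⟩, hjS⟩, hsij⟩ := hj
    refine ⟨⟨?_, ?_⟩, ?_⟩
    · omega
    · omega
    · rwa [Nat.sub_add_cancel hsij]
  · intro x hx y hy hxy
    simp only [hA, Finset.mem_coe, Finset.mem_filter, Finset.mem_Icc] at hx hy
    dsimp at hxy
    omega

lemma core_count (n k : ℕ) (hkn : k ≤ n) (W : Finset ℕ) (P : Fin n → ℕ → Prop) :
    ∃ T : Finset (Fin n), T.card = k ∧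
      ∑ m ∈ W, ((Finset.univ.filter (fun i => P i m)).card) ^ k ≤
        k.factorial * n.choose k * ((W.filter (fun m => ∀ i ∈ T, P i m)).card)
          + k ^ 2 * n ^ (k - 1) * W.card := by
  set I : ℕ → Finset (Fin n) := fun m => Finset.univ.filter (fun i => P i m) with hI
  set pc : Finset (Finset (Fin n)) := Finset.powersetCard k (Finset.univ : Finset (Fin n))
    with hpc
  have hpc_card : pc.card = n.choose k := by
    rw [hpc, Finset.card_powersetCard, Finset.card_univ, Fintype.card_fin]
  have hpc_ne : pc.Nonempty := by
    rw [hpc]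
    exact Finset.powersetCard_nonempty.2 (by simpa using hkn)
  -- pointwise bound
  have hpoint : ∀ m, (I m).card ^ k ≤
      k.factorial * (Finset.powersetCard k (I m)).card + k ^ 2 * n ^ (k - 1) := by
    intro m
    have h1 := pow_le_desc k (I m).card
    have h2 : (I m).card.descFactorial k = k.factorial * (Finset.powersetCard k (I m)).card := by
      rw [Finset.card_powersetCard, Nat.descFactorial_eq_factorial_mul_choose]
    have h3 : (I m).card ^ (k - 1) ≤ n ^ (k - 1) := by
      apply Nat.pow_le_pow_left
      calc (I m).card ≤ (Finset.univ : Finset (Fin n)).card := Finset.card_le_card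
            (Finset.filter_subset _ _)
        _ = n := by rw [Finset.card_univ, Fintype.card_fin]
    calc (I m).card ^ k ≤ (I m).card.descFactorial k + k ^ 2 * (I m).card ^ (k - 1) := h1
      _ ≤ k.factorial * (Finset.powersetCard k (I m)).card + k ^ 2 * n ^ (k - 1) := by
          rw [h2]; exact Nat.add_le_add_left (Nat.mul_le_mul_left _ h3) _
  -- identity: powersetCard of I m as filter over pc
  have hid : ∀ m, (Finset.powersetCard k (I m)).card = (pc.filter (fun T => T ⊆ I m)).card := by
    intro m
    congr 1
    ext T
    simp only [Finset.mem_powersetCard, hpc, Finset.mem_filter]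
    constructor
    · rintro ⟨h1, h2⟩; exact ⟨⟨Finset.subset_univ T, h2⟩, h1⟩
    · rintro ⟨⟨_, h2⟩, h1⟩; exact ⟨h1, h2⟩
  -- swap sums
  have hswap : ∑ m ∈ W, (Finset.powersetCard k (I m)).card
      = ∑ T ∈ pc, (W.filter (fun m => ∀ i ∈ T, P i m)).card := by
    calc ∑ m ∈ W, (Finset.powersetCard k (I m)).card
        = ∑ m ∈ W, ∑ T ∈ pc, (if T ⊆ I m then 1 else 0) := by
          refine Finset.sum_congr rfl fun m _ => ?_
          rw [hid m, Finset.card_filter]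
      _ = ∑ T ∈ pc, ∑ m ∈ W, (if T ⊆ I m then 1 else 0) := Finset.sum_comm
      _ = ∑ T ∈ pc, (W.filter (fun m => ∀ i ∈ T, P i m)).card := by
          refine Finset.sum_congr rfl fun T _ => ?_
          rw [Finset.card_filter]
          refine Finset.sum_congr rfl fun m _ => ?_
          congr 1
          simp only [eq_iff_iff]
          constructor
          · intro h i hi
            have := h hi
            simp only [hI, Finset.mem_filter] at this
            exact this.2
          · intro h i hi
            simp only [hI, Finset.mem_filter]
            exact ⟨Finset.mem_univ i, h i hi⟩
  -- max over pc
  obtain ⟨T₀, hT₀pc, hT₀max⟩ := Finset.exists_max_image pc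
    (fun T => (W.filter (fun m => ∀ i ∈ T, P i m)).card) hpc_ne
  have hTcard : T₀.card = k := (Finset.mem_powersetCard.1 hT₀pc).2
  refine ⟨T₀, hTcard, ?_⟩
  have hsum_le : ∑ T ∈ pc, (W.filter (fun m => ∀ i ∈ T, P i m)).card
      ≤ n.choose k * (W.filter (fun m => ∀ i ∈ T₀, P i m)).card := by
    calc ∑ T ∈ pc, (W.filter (fun m => ∀ i ∈ T, P i m)).card
        ≤ pc.card * (W.filter (fun m => ∀ i ∈ T₀, P i m)).card := by
          rw [← smul_eq_mul]
          exact Finset.sum_le_card_nsmul pc _ _ fun T hT => hT₀max T hT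
      _ = _ := by rw [hpc_card]
  calc ∑ m ∈ W, ((Finset.univ.filter (fun i => P i m)).card) ^ k
      ≤ ∑ m ∈ W, (k.factorial * (Finset.powersetCard k (I m)).card + k ^ 2 * n ^ (k - 1)) :=
        Finset.sum_le_sum fun m _ => hpoint m
    _ = k.factorial * (∑ m ∈ W, (Finset.powersetCard k (I m)).card)
          + k ^ 2 * n ^ (k - 1) * W.card := by
        rw [Finset.sum_add_distrib, Finset.mul_sum, Finset.sum_const, smul_eq_mul]
        ring
    _ ≤ k.factorial * (n.choose k * (W.filter (fun m => ∀ i ∈ T₀, P i m)).card)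
          + k ^ 2 * n ^ (k - 1) * W.card := by
        rw [hswap]
        exact Nat.add_le_add_right (Nat.mul_le_mul_left _ hsum_le) _
    _ = k.factorial * n.choose k * ((W.filter (fun m => ∀ i ∈ T₀, P i m)).card)
          + k ^ 2 * n ^ (k - 1) * W.card := by ring
set_option maxHeartbeats 1000000 in
theorem banach_density_intersection
    (S : Set ℕ) (hS : 0 < upperBanachDensity S)
    (k : ℕ) (hk : 1 ≤ k) (ε : ℝ) (hε : 0 < ε) :
    ∃ N : ℕ, ∀ n : ℕ, N ≤ n → ∀ s : Fin n → ℕ, StrictMono s →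
      ∃ t : Fin k → Fin n, StrictMono t ∧
        upperBanachDensity S ^ k - ε ≤
          upperBanachDensity (⋂ j : Fin k, {m : ℕ | m + s (t j) ∈ S}) := by
  set d := upperBanachDensity S with hd
  have hd1 : d ≤ 1 := uBD_le_one S
  have hk0 : 0 < (k : ℝ) := by exact_mod_cast hk
  set δ : ℝ := min (ε / (4 * k)) (d / 4) with hδdef
  have hδpos : 0 < δ := lt_min (by positivity) (by positivity)
  have hδε : 2 * k * δ ≤ ε / 2 := by
    have h1 : δ ≤ ε / (4 * k) := min_le_left _ _
    have h2 : 2 * (k : ℝ) * (ε / (4 * k)) = ε / 2 := by field_simp; ring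
    nlinarith
  have hδd : 2 * δ ≤ d / 2 := by
    have := min_le_right (ε / (4 * k)) (d / 4); linarith
  set β : ℝ := d - 2 * δ with hβdef
  have hβ0 : 0 ≤ β := by have := hS; linarith
  have hβd : β ≤ d := by linarith
  have hβ1 : β ≤ 1 := le_trans hβd hd1
  refine ⟨k + Nat.ceil (2 * (k : ℝ) ^ 2 / ε), ?_⟩
  intro n hn s _hs
  have hkn : k ≤ n := le_trans (Nat.le_add_right _ _) hn
  have hn1 : 1 ≤ n := le_trans hk hkn
  have hnR : 0 < (n : ℝ) := by exact_mod_cast hn1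
  have hknε : (k : ℝ) ^ 2 / n ≤ ε / 2 := by
    have h1 : (Nat.ceil (2 * (k : ℝ) ^ 2 / ε) : ℝ) ≤ n := by
      exact_mod_cast le_trans (Nat.le_add_left _ k) hn
    have h2 : 2 * (k : ℝ) ^ 2 / ε ≤ n := le_trans (Nat.le_ceil _) h1
    rw [div_le_iff₀ hε] at h2
    rw [div_le_iff₀ hnR]
    nlinarith
  set σ := Finset.univ.sup s with hσ
  -- Step A: for every L₀ there is a good window for some T
  have stepA : ∀ L₀ : ℕ, ∃ L', L₀ ≤ L' ∧ ∃ T : Finset (Fin n), T.card = k ∧ ∃ M',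
      d ^ k - ε ≤ wdens {m : ℕ | ∀ i ∈ T, m + s i ∈ S} L' M' := by
    intro L₀
    have hlt : d - δ < upperBanachDensity S := by rw [← hd]; linarith
    obtain ⟨L, hLge, M, hLM⟩ := uBD_freq hlt (max L₀ (Nat.ceil (2 * (σ : ℝ) / δ)))
    have hLL₀ : L₀ ≤ L := le_trans (le_max_left _ _) hLge
    have hLσ : 2 * (σ : ℝ) ≤ δ * (L + 1) := by
      have h1 : (Nat.ceil (2 * (σ : ℝ) / δ) : ℝ) ≤ L := by
        exact_mod_cast le_trans (le_max_right _ _) hLge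
      have h2 : 2 * (σ : ℝ) / δ ≤ L := le_trans (Nat.le_ceil _) h1
      rw [div_le_iff₀ hδpos] at h2
      nlinarith
    set cS := ((Finset.Icc M (M + L)).filter (fun j => j ∈ S)).card with hcS
    have hLpos : (0 : ℝ) < (L : ℝ) + 1 := by positivity
    have hloS : (d - δ) * ((L : ℝ) + 1) ≤ (cS : ℝ) := by
      have h := hLM
      unfold wdens at h
      rw [lt_div_iff₀ hLpos] at h
      exact le_of_lt h
    set W := Finset.Icc (M - σ) (M + L) with hW
    set w := W.card with hw
    have hwcard : w = M + L + 1 - (M - σ) := by rw [hw, hW, Nat.card_Icc]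
    have hw1n : L + 1 ≤ w := by omega
    have hw2n : w ≤ L + σ + 1 := by omega
    have hw1 : (L : ℝ) + 1 ≤ (w : ℝ) := by exact_mod_cast hw1n
    have hw2 : (w : ℝ) ≤ (L : ℝ) + (σ : ℝ) + 1 := by exact_mod_cast hw2n
    have hw0 : (0 : ℝ) < (w : ℝ) := lt_of_lt_of_le hLpos hw1
    -- lower bound for each shifted count
    have hci : ∀ i : Fin n, β * w ≤ ((W.filter (fun m => m + s i ∈ S)).card : ℝ) := by
      intro i
      have h1 := shift_count S M L (s i) σ (Finset.le_sup (Finset.mem_univ i))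
      rw [← hcS, ← hW] at h1
      have h2 : (cS : ℝ) - σ ≤ ((W.filter (fun m => m + s i ∈ S)).card : ℝ) := by
        have : (cS : ℝ) ≤ ((W.filter (fun m => m + s i ∈ S)).card : ℝ) + σ := by
          exact_mod_cast h1
        linarith
      have hσ0 : (0 : ℝ) ≤ (σ : ℝ) := Nat.cast_nonneg σ
      have key : β * w ≤ (d - δ) * ((L : ℝ) + 1) - σ := by
        have e1 : β * w ≤ β * ((L : ℝ) + σ + 1) := mul_le_mul_of_nonneg_left hw2 hβ0
        have e1' : β * ((L : ℝ) + σ + 1) = β * ((L : ℝ) + 1) + β * σ := by ring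
        have e2 : (d - δ) * ((L : ℝ) + 1) - β * ((L : ℝ) + 1) = δ * ((L : ℝ) + 1) := by
          rw [hβdef]; ring
        have e3 : β * σ ≤ 1 * σ := mul_le_mul_of_nonneg_right hβ1 hσ0
        linarith
      linarith
    -- apply the counting lemma
    obtain ⟨T, hTcard, hcore⟩ := core_count n k hkn W (fun i m => m + s i ∈ S)
    set c := (W.filter (fun m => ∀ i ∈ T, m + s i ∈ S)).card with hc
    set f : ℕ → ℕ := fun m => (Finset.univ.filter (fun i : Fin n => m + s i ∈ S)).card with hf
    have hsumf : ∑ i : Fin n, ((W.filter (fun m => m + s i ∈ S)).card) = ∑ m ∈ W, f m := by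
      simp only [hf, Finset.card_filter]
      exact Finset.sum_comm
    have hsumf_lo : (n : ℝ) * (β * w) ≤ ∑ m ∈ W, (f m : ℝ) := by
      have h1 : (Finset.univ : Finset (Fin n)).card • (β * w)
          ≤ ∑ i : Fin n, ((W.filter (fun m => m + s i ∈ S)).card : ℝ) :=
        Finset.card_nsmul_le_sum _ _ _ fun i _ => hci i
      rw [Finset.card_univ, Fintype.card_fin, nsmul_eq_mul] at h1
      have h2 : ∑ i : Fin n, ((W.filter (fun m => m + s i ∈ S)).card : ℝ)
          = ∑ m ∈ W, (f m : ℝ) := by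
        exact_mod_cast congrArg (Nat.cast : ℕ → ℝ) hsumf
      linarith [h1, h2.le, h2.ge]
    have hpm : (∑ m ∈ W, (f m : ℝ)) ^ k / (w : ℝ) ^ (k - 1) ≤ ∑ m ∈ W, (f m : ℝ) ^ k := by
      obtain ⟨k', rfl⟩ : ∃ k', k = k' + 1 := ⟨k - 1, by omega⟩
      have := pow_sum_div_card_le_sum_pow (s := W) (f := fun m => (f m : ℝ))
        (fun i _ => by positivity) k'
      simpa [hw] using this
    have hfk_hi : ∑ m ∈ W, (f m : ℝ) ^ k ≤ (n : ℝ) ^ k * c + (k : ℝ) ^ 2 * (n : ℝ) ^ (k - 1) * w := by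
      have hnat : ∑ m ∈ W, (f m) ^ k ≤ n ^ k * c + k ^ 2 * n ^ (k - 1) * w := by
        have h1 : k.factorial * n.choose k ≤ n ^ k := by
          rw [← Nat.descFactorial_eq_factorial_mul_choose]
          exact Nat.descFactorial_le_pow n k
        calc ∑ m ∈ W, (f m) ^ k
            ≤ k.factorial * n.choose k * c + k ^ 2 * n ^ (k - 1) * w := hcore
          _ ≤ n ^ k * c + k ^ 2 * n ^ (k - 1) * w := by
              exact Nat.add_le_add_right (Nat.mul_le_mul_right _ h1) _
      calc ∑ m ∈ W, (f m : ℝ) ^ k = ((∑ m ∈ W, (f m) ^ k : ℕ) : ℝ) := by push_cast; rfl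
        _ ≤ (((n ^ k * c + k ^ 2 * n ^ (k - 1) * w : ℕ)) : ℝ) := by exact_mod_cast hnat
        _ = (n : ℝ) ^ k * c + (k : ℝ) ^ 2 * (n : ℝ) ^ (k - 1) * w := by push_cast; ring
    -- combine the chain
    have hchain : β ^ k * w ≤ (c : ℝ) + (k : ℝ) ^ 2 * w / n := by
      have hwpos : (0 : ℝ) < (w : ℝ) ^ (k - 1) := by positivity
      have h1 : ((n : ℝ) * (β * w)) ^ k ≤ (∑ m ∈ W, (f m : ℝ)) ^ k := by
        apply pow_le_pow_left₀ (by positivity) hsumf_lo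
      have h2 : (∑ m ∈ W, (f m : ℝ)) ^ k ≤ (w : ℝ) ^ (k - 1) * (∑ m ∈ W, (f m : ℝ) ^ k) := by
        rw [div_le_iff₀ hwpos] at hpm
        linarith [hpm]
      have hwk : (w : ℝ) ^ k = (w : ℝ) ^ (k - 1) * w := by
        rw [← pow_succ]; congr 1; omega
      have hnk : (n : ℝ) ^ k = (n : ℝ) ^ (k - 1) * n := by
        rw [← pow_succ]; congr 1; omega
      have h3 : (w : ℝ) ^ (k - 1) * ((n : ℝ) ^ k * (β ^ k * w))
          ≤ (w : ℝ) ^ (k - 1) * ((n : ℝ) ^ k * ((c : ℝ) + (k : ℝ) ^ 2 * w / n)) := by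
        have lhs_eq : ((n : ℝ) * (β * w)) ^ k
            = (w : ℝ) ^ (k - 1) * ((n : ℝ) ^ k * (β ^ k * w)) := by
          rw [mul_pow, mul_pow, hwk]; ring
        have rhs_eq : (w : ℝ) ^ (k - 1) * ((n : ℝ) ^ k * c + (k : ℝ) ^ 2 * (n : ℝ) ^ (k - 1) * w)
            = (w : ℝ) ^ (k - 1) * ((n : ℝ) ^ k * ((c : ℝ) + (k : ℝ) ^ 2 * w / n)) := by
          rw [hnk]; field_simp
        calc (w : ℝ) ^ (k - 1) * ((n : ℝ) ^ k * (β ^ k * w))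
            = ((n : ℝ) * (β * w)) ^ k := lhs_eq.symm
          _ ≤ (w : ℝ) ^ (k - 1) * (∑ m ∈ W, (f m : ℝ) ^ k) := le_trans h1 h2
          _ ≤ (w : ℝ) ^ (k - 1) * ((n : ℝ) ^ k * c + (k : ℝ) ^ 2 * (n : ℝ) ^ (k - 1) * w) := by
              exact mul_le_mul_of_nonneg_left hfk_hi (le_of_lt hwpos)
          _ = _ := rhs_eq
      have h4 := (mul_le_mul_iff_right₀ hwpos).mp h3
      exact (mul_le_mul_iff_right₀ (pow_pos hnR k)).mp h4
    -- conclude density bound on the window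
    have hdk : d ^ k - ε ≤ β ^ k - (k : ℝ) ^ 2 / n := by
      have h1 : d ^ k - β ^ k ≤ k * (d - β) := pow_sub_pow_le hβ0 hβd hd1 k
      have h2 : (k : ℝ) * (d - β) = 2 * k * δ := by rw [hβdef]; ring
      linarith
    refine ⟨w - 1, by omega, T, hTcard, M - σ, ?_⟩
    have hIcc : Finset.Icc (M - σ) ((M - σ) + (w - 1)) = W := by
      rw [hW]; congr 1; omega
    have hwden : wdens {m : ℕ | ∀ i ∈ T, m + s i ∈ S} (w - 1) (M - σ) = (c : ℝ) / w := by
      unfold wdens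
      rw [hIcc]
      have hden : ((w - 1 : ℕ) : ℝ) + 1 = (w : ℝ) := by
        have : w - 1 + 1 = w := by omega
        exact_mod_cast congrArg (Nat.cast : ℕ → ℝ) this
      rw [hden]
      rw [hc]
      congr! 2
      congr 1
      ext m
      simp only [Finset.mem_filter, Set.mem_setOf_eq]
    rw [hwden, le_div_iff₀ hw0]
    have h5 : (β ^ k - (k : ℝ) ^ 2 / n) * w ≤ c := by
      have : (β ^ k - (k : ℝ) ^ 2 / n) * w = β ^ k * w - (k : ℝ) ^ 2 * w / n := by ring
      rw [this]
      linarith [hchain]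
    calc (d ^ k - ε) * w ≤ (β ^ k - (k : ℝ) ^ 2 / n) * w := by
          apply mul_le_mul_of_nonneg_right _ (le_of_lt hw0)
          linarith [hdk, hknε]
      _ ≤ c := h5
  -- Step B: pigeonhole a single T working for arbitrarily large lengths
  have stepB : ∃ T : Finset (Fin n), T.card = k ∧ ∀ L₀ : ℕ, ∃ L', L₀ ≤ L' ∧ ∃ M',
      d ^ k - ε ≤ wdens {m : ℕ | ∀ i ∈ T, m + s i ∈ S} L' M' := by
    by_contra hcon
    push_neg at hcon
    have hcon' : ∀ T : Finset (Fin n), ∃ L₀ : ℕ, ∀ L', L₀ ≤ L' → T.card = k → ∀ M',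
        wdens {m : ℕ | ∀ i ∈ T, m + s i ∈ S} L' M' < d ^ k - ε := by
      intro T
      by_cases hc : T.card = k
      · obtain ⟨L₀, hL₀⟩ := hcon T hc
        exact ⟨L₀, fun L' h _ M' => hL₀ L' h M'⟩
      · exact ⟨0, fun L' _ hc' => absurd hc' hc⟩
    choose b hb using hcon'
    obtain ⟨L', hL', T, hTc, M', hM'⟩ := stepA (Finset.univ.sup b)
    exact absurd hM'
      (not_le.2 (hb T L' (le_trans (Finset.le_sup (Finset.mem_univ T)) hL') hTc M'))
  -- Step C: conclude
  obtain ⟨T, hTcard, hTfreq⟩ := stepB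
  have hG : d ^ k - ε ≤ upperBanachDensity {m : ℕ | ∀ i ∈ T, m + s i ∈ S} :=
    le_uBD_of_freq hTfreq
  refine ⟨T.orderEmbOfFin hTcard, (T.orderEmbOfFin hTcard).strictMono, ?_⟩
  refine le_trans hG (uBD_mono ?_)
  intro m hm
  simp only [Set.mem_setOf_eq] at hm
  simp only [Set.mem_iInter, Set.mem_setOf_eq]
  intro j
  exact hm _ (Finset.orderEmbOfFin_mem T hTcard j)
end
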